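/- arXiv:0901.0834 — 13 statements merged into one kernel-verified Lean document; each statement's English description precedes it below -/
import Mathlib

section
/- (Data Processing Theorem for smooth 0-divergence) Let P and Q be probability mass functions on a finite set Ω, and let W be a stochastic kernel from Ω to a finite set Ω' (i.e., W(·|ω) is a probability mass function on Ω' for each ω ∈ Ω). Then for all δ ≥ 0, D₀^δ(P‖Q) ≥ D₀^δ(W∘P‖W∘Q), where (W∘P)(ω') = ∑_ω W(ω'|ω) P(ω) and similarly for W∘Q. -/
open scoped BigOperators Classical

/-- `-log₂ s` with the convention `-log₂ 0 = +∞`, valued in the extended reals. -/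
noncomputable def negLog2 (s : ℝ) : EReal :=
  if s = 0 then ⊤ else ((-Real.logb 2 s : ℝ) : EReal)

/-- `P` is a probability mass function on the finite set `Ω`. -/
def IsPmf {Ω : Type*} [Fintype Ω] (P : Ω → ℝ) : Prop :=
  (∀ x, 0 ≤ P x) ∧ ∑ x, P x = 1

/-- The smooth `0`-divergence
`D₀^δ(P‖Q) = sup { -log₂ (∑_x Φ x * Q x) : Φ : Ω → [0,1], ∑_x Φ x * P x ≥ 1 - δ }`. -/
noncomputable def D0smooth {Ω : Type*} [Fintype Ω] (P Q : Ω → ℝ) (δ : ℝ) : EReal :=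
  sSup { r : EReal | ∃ Φ : Ω → ℝ, (∀ x, 0 ≤ Φ x ∧ Φ x ≤ 1) ∧
    1 - δ ≤ ∑ x, Φ x * P x ∧ r = negLog2 (∑ x, Φ x * Q x) }

/-- Rényi's divergence of order `0`: `D₀(P‖Q) = -log₂ (∑_{x : P x > 0} Q x)`. -/
noncomputable def D0 {Ω : Type*} [Fintype Ω] (P Q : Ω → ℝ) : EReal :=
  negLog2 (∑ x ∈ Finset.univ.filter (fun x => 0 < P x), Q x)

/-- Data processing theorem for the smooth `0`-divergence:
applying a stochastic kernel `W` cannot increase `D₀^δ`. -/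
theorem D0smooth_data_processing {Ω Ω' : Type*} [Fintype Ω] [Fintype Ω']
    (P Q : Ω → ℝ) (hP : IsPmf P) (hQ : IsPmf Q)
    (W : Ω → Ω' → ℝ) (hW : ∀ ω, IsPmf (W ω)) (δ : ℝ) (hδ : 0 ≤ δ) :
    D0smooth (fun ω' => ∑ ω, W ω ω' * P ω) (fun ω' => ∑ ω, W ω ω' * Q ω) δ
      ≤ D0smooth P Q δ := by
  apply sSup_le_sSup
  rintro r ⟨Φ', hΦ', hPsum, hr⟩
  refine ⟨fun ω => ∑ ω', Φ' ω' * W ω ω', ?_, ?_, ?_⟩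
  · intro ω
    constructor
    · exact Finset.sum_nonneg fun ω' _ =>
        mul_nonneg (hΦ' ω').1 ((hW ω).1 ω')
    · calc ∑ ω', Φ' ω' * W ω ω' ≤ ∑ ω', W ω ω' :=
          Finset.sum_le_sum fun ω' _ => by
            nlinarith [(hΦ' ω').1, (hΦ' ω').2, (hW ω).1 ω']
        _ = 1 := (hW ω).2
  all_goals
    have key : ∀ R : Ω → ℝ, ∑ x : Ω', Φ' x * (∑ ω, W ω x * R ω)
        = ∑ ω, (∑ ω', Φ' ω' * W ω ω') * R ω := by
      intro R
      simp only [Finset.mul_sum, Finset.sum_mul]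
      rw [Finset.sum_comm]
      exact Finset.sum_congr rfl fun _ _ => Finset.sum_congr rfl fun _ _ => by ring
  · exact le_trans hPsum (le_of_eq (key P))
  · rw [hr]; congr 1; exact key Q
end

section
/- Let M be uniformly distributed on {1,…,m} and let M̂ be a random variable on {1,…,m} jointly distributed with M such that Pr[M̂ ≠ M] ≤ ε, where 0 ≤ ε < 1. Then log m ≤ D₀^ε(P_{MM̂} ‖ P_M × P_{M̂}), where P_{MM̂} is the joint distribution and P_M, P_{M̂} are its marginals. -/
open scoped BigOperators Classical

/-- If `M` is uniform on `{1,…,m}` and `Pr[M̂ ≠ M] ≤ ε`, then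
`log₂ m ≤ D₀^ε(P_{MM̂} ‖ P_M × P_M̂)`. -/
theorem log_le_D0smooth_of_lowError (m : ℕ) (hm : 1 ≤ m) (ε : ℝ)
    (hε0 : 0 ≤ ε) (hε1 : ε < 1)
    (J : Fin m × Fin m → ℝ) (hJ : IsPmf J)
    (hUnif : ∀ i : Fin m, ∑ j : Fin m, J (i, j) = 1 / m)
    (hErr : 1 - ε ≤ ∑ i : Fin m, J (i, i)) :
    (Real.logb 2 m : EReal)
      ≤ D0smooth J (fun p => (1 / m) * ∑ i : Fin m, J (i, p.2)) ε := by
  have hm0 : (0:ℝ) < m := by exact_mod_cast hm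
  apply le_sSup
  refine ⟨fun p => if p.1 = p.2 then 1 else 0, ?_, ?_, ?_⟩
  · intro x; by_cases h : x.1 = x.2 <;> simp [h]
  · calc 1 - ε ≤ ∑ i : Fin m, J (i, i) := hErr
      _ = ∑ x : Fin m × Fin m, (if x.1 = x.2 then (1:ℝ) else 0) * J x := by
          rw [Fintype.sum_prod_type]
          simp only [ite_mul, one_mul, zero_mul, Finset.sum_ite_eq,
            Finset.mem_univ, if_true]
  · have hsum : ∑ x : Fin m × Fin m,
        (if x.1 = x.2 then (1:ℝ) else 0) * ((1 / m) * ∑ i : Fin m, J (i, x.2))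
        = 1 / m := by
      rw [Fintype.sum_prod_type]
      simp only [ite_mul, one_mul, zero_mul, Finset.sum_ite_eq,
        Finset.mem_univ, if_true]
      rw [← Finset.mul_sum, Finset.sum_comm]
      have h1 : ∑ k : Fin m, ∑ i : Fin m, J (k, i) = 1 := by
        rw [← Fintype.sum_prod_type]; exact hJ.2
      rw [h1, mul_one]
    rw [hsum, negLog2, if_neg (by positivity), one_div, Real.logb_inv, neg_neg]
end

section
/- (Converse) Consider a channel with finite input alphabet X, finite output alphabet Y, and channel law P_{Y|X}. If an (m,ε)-code exists (an encoder f : {1,…,m} → X and decoder g : Y → {1,…,m} with average error probability at most ε under a uniform message), then log₂ m ≤ sup_{P_X} D₀^ε(P_{XY} ‖ P_X × P_Y), where the supremum is over probability distributions P_X on X, P_{XY}(x,y) = P_X(x) P_{Y|X}(y|x), and P_Y is the corresponding output marginal. -/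
open scoped BigOperators Classical

/-- Converse: any `(m,ε)`-code for a channel `P_{Y|X}` satisfies
`log₂ m ≤ sup_{P_X} D₀^ε(P_{XY} ‖ P_X × P_Y)`. -/
theorem channel_coding_converse {X Y : Type*} [Fintype X] [Fintype Y]
    (W : X → Y → ℝ) (hW : ∀ x, IsPmf (W x))
    (m : ℕ) (hm : 1 ≤ m) (ε : ℝ) (hε0 : 0 ≤ ε) (hε1 : ε < 1)
    (f : Fin m → X) (g : Y → Fin m)
    (hcode : (1 / m : ℝ) * ∑ i : Fin m,
        ∑ y ∈ Finset.univ.filter (fun y => g y ≠ i), W (f i) y ≤ ε) :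
    (Real.logb 2 m : EReal)
      ≤ ⨆ PX : { p : X → ℝ // IsPmf p },
          D0smooth (fun q : X × Y => PX.1 q.1 * W q.1 q.2)
            (fun q : X × Y => PX.1 q.1 * ∑ x, PX.1 x * W x q.2) ε := by
  classical
  have hm' : (0:ℝ) < m := by exact_mod_cast Nat.lt_of_lt_of_le Nat.zero_lt_one hm
  have hmne : (m:ℝ) ≠ 0 := ne_of_gt hm'
  set n : X → ℝ := fun x => ((Finset.univ.filter (fun i : Fin m => f i = x)).card : ℝ) with hn
  have hn_sum : ∑ x, n x = m := by
    have h := Finset.card_eq_sum_card_fiberwise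
      (f := f) (s := (Finset.univ : Finset (Fin m))) (t := (Finset.univ : Finset X))
      (fun i _ => Finset.mem_univ _)
    simp only [Finset.card_univ, Fintype.card_fin] at h
    rw [hn]
    beta_reduce
    exact_mod_cast h.symm
  have hn_ge : ∀ y : Y, (1:ℝ) ≤ n (f (g y)) := by
    intro y
    have : g y ∈ Finset.univ.filter (fun i : Fin m => f i = f (g y)) := by
      simp
    have hc : 1 ≤ (Finset.univ.filter (fun i : Fin m => f i = f (g y))).card :=
      Finset.card_pos.mpr ⟨g y, this⟩
    show (1:ℝ) ≤ ((Finset.univ.filter (fun i : Fin m => f i = f (g y))).card : ℝ)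
    exact_mod_cast hc
  have hn_nonneg : ∀ x, (0:ℝ) ≤ n x := fun x => by positivity
  set PX : X → ℝ := fun x => n x / m with hPX
  have hPmf : IsPmf PX := by
    constructor
    · intro x; exact div_nonneg (hn_nonneg x) hm'.le
    · rw [hPX]
      simp only
      rw [← Finset.sum_div, hn_sum, div_self hmne]
  set Φ : X × Y → ℝ := fun q => if f (g q.2) = q.1 then (n q.1)⁻¹ else 0 with hΦ
  -- generic sum computation
  have key : ∀ A : X → Y → ℝ,
      ∑ q : X × Y, Φ q * (PX q.1 * A q.1 q.2) = ∑ y, A (f (g y)) y / m := by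
    intro A
    rw [Fintype.sum_prod_type, Finset.sum_comm]
    refine Finset.sum_congr rfl fun y _ => ?_
    have : ∀ x, Φ (x, y) * (PX x * A x y)
        = if f (g y) = x then (n x)⁻¹ * (PX x * A x y) else 0 := by
      intro x
      simp only [hΦ]
      split <;> simp
    rw [Finset.sum_congr rfl fun x _ => this x, Finset.sum_ite_eq]
    simp only [Finset.mem_univ, if_true, hPX]
    have hne : n (f (g y)) ≠ 0 := by
      have := hn_ge y; linarith
    field_simp
  -- the P-sum
  have hPsum : ∑ q : X × Y, Φ q * (PX q.1 * W q.1 q.2) = ∑ y, W (f (g y)) y / m :=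
    key W
  have hcorrect : ∑ y, W (f (g y)) y = m - ∑ i : Fin m,
      ∑ y ∈ Finset.univ.filter (fun y => g y ≠ i), W (f i) y := by
    have hsplit : ∀ i : Fin m,
        ∑ y ∈ Finset.univ.filter (fun y => g y = i), W (f i) y
          + ∑ y ∈ Finset.univ.filter (fun y => g y ≠ i), W (f i) y = 1 := by
      intro i
      rw [Finset.sum_filter_add_sum_filter_not]
      exact (hW (f i)).2
    have hfib : ∑ i : Fin m, ∑ y ∈ Finset.univ.filter (fun y => g y = i), W (f i) y
        = ∑ y, W (f (g y)) y := by
      rw [← Finset.sum_fiberwise_of_maps_to (g := g) (fun y _ => Finset.mem_univ (g y))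
        (f := fun y => W (f (g y)) y)]
      refine Finset.sum_congr rfl fun i _ => Finset.sum_congr rfl fun y hy => ?_
      have : g y = i := (Finset.mem_filter.mp hy).2
      rw [this]
    have htot : ∑ i : Fin m, (1:ℝ) = m := by simp
    have := Finset.sum_congr rfl (fun i (_ : i ∈ (Finset.univ : Finset (Fin m))) => hsplit i)
    rw [Finset.sum_add_distrib, hfib, htot] at this
    linarith
  have hge : 1 - ε ≤ ∑ q : X × Y, Φ q * (PX q.1 * W q.1 q.2) := by
    rw [hPsum, ← Finset.sum_div, hcorrect, le_div_iff₀ hm']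
    have h2 := mul_le_mul_of_nonneg_left hcode hm'.le
    rw [one_div, ← mul_assoc, mul_inv_cancel₀ hmne, one_mul] at h2
    nlinarith
  -- the Q-sum
  have hQsum : ∑ q : X × Y, Φ q * (PX q.1 * ∑ x, PX x * W x q.2) = 1 / m := by
    rw [key (fun _ y => ∑ x, PX x * W x y)]
    have : ∀ y : Y, (∑ x, PX x * W x y) = ∑ x, PX x * W x y := fun _ => rfl
    rw [← Finset.sum_div]
    congr 1
    rw [Finset.sum_comm]
    have : ∀ x, ∑ y, PX x * W x y = PX x := by
      intro x
      rw [← Finset.mul_sum, (hW x).2, mul_one]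
    rw [Finset.sum_congr rfl fun x _ => this x, hPmf.2]
  -- bounds on Φ
  have hΦbound : ∀ q : X × Y, 0 ≤ Φ q ∧ Φ q ≤ 1 := by
    intro q
    simp only [hΦ]
    split
    · rename_i h
      constructor
      · positivity
      · have h1 : (1:ℝ) ≤ n q.1 := h ▸ hn_ge q.2
        rw [inv_le_one_iff₀]
        right; exact h1
    · exact ⟨le_refl 0, zero_le_one⟩
  -- conclude
  have hmem : (Real.logb 2 m : EReal) ∈
      { r : EReal | ∃ Φ : X × Y → ℝ, (∀ x, 0 ≤ Φ x ∧ Φ x ≤ 1) ∧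
        1 - ε ≤ ∑ x, Φ x * (PX x.1 * W x.1 x.2) ∧
        r = negLog2 (∑ x, Φ x * (PX x.1 * ∑ x', PX x' * W x' x.2)) } := by
    refine ⟨Φ, hΦbound, hge, ?_⟩
    rw [hQsum]
    unfold negLog2
    rw [if_neg (by positivity)]
    congr 1
    rw [one_div, Real.logb_inv, neg_neg]
  calc (Real.logb 2 m : EReal)
      ≤ D0smooth (fun q : X × Y => PX q.1 * W q.1 q.2)
          (fun q : X × Y => PX q.1 * ∑ x, PX x * W x q.2) ε := le_sSup hmem
    _ ≤ _ := le_iSup (fun PX : { p : X → ℝ // IsPmf p } =>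
          D0smooth (fun q : X × Y => PX.1 q.1 * W q.1 q.2)
            (fun q : X × Y => PX.1 q.1 * ∑ x, PX.1 x * W x q.2) ε) ⟨PX, hPmf⟩
end

section
/- (Random-coding error bound) Let X, Y be finite sets, P_{Y|X} a stochastic kernel from X to Y, P_X a distribution on X inducing joint distribution P_{XY} and output marginal P_Y. Let Φ : X × Y → [0,1] satisfy ∑_{x,y} Φ(x,y) P_{XY}(x,y) ≥ 1 - ε'. For a codebook of m codewords drawn i.i.d. from P_X and the randomized decoder that, upon receiving y, selects each message j independently with probability Φ(f(j),y) and succeeds iff exactly the transmitted message is selected, the average error probability (over codebooks, messages, channel, and decoder randomness) is at most (m-1)·∑_{x,y} Φ(x,y) P_X(x) P_Y(y) + ε'. -/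
open scoped BigOperators Classical

section Aux

variable {X : Type*} [Fintype X]

lemma sum_pi_prod {m : ℕ} (F : Fin m → X → ℝ) :
    ∑ f : Fin m → X, ∏ j, F j (f j) = ∏ j, ∑ x, F j x :=
  (Fintype.prod_sum F).symm

lemma weierstrass {ι : Type*} (s : Finset ι) (b : ι → ℝ)
    (hb : ∀ j ∈ s, 0 ≤ b j ∧ b j ≤ 1) :
    1 - ∑ j ∈ s, b j ≤ ∏ j ∈ s, (1 - b j) := by
  classical
  induction s using Finset.induction with
  | empty => simp
  | @insert a s' hx ih =>
    rw [Finset.sum_insert hx, Finset.prod_insert hx]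
    have hb' : ∀ j ∈ s', 0 ≤ b j ∧ b j ≤ 1 := fun j hj => hb j (Finset.mem_insert_of_mem hj)
    have ih' := ih hb'
    have ha := hb a (Finset.mem_insert_self a s')
    have hs : 0 ≤ ∑ j ∈ s', b j := Finset.sum_nonneg fun j hj => (hb' j hj).1
    nlinarith [ih', ha.1, ha.2, hs]

lemma exp_one {m : ℕ} (PX : X → ℝ) (h1 : ∑ x, PX x = 1) (i : Fin m) (g : X → ℝ) :
    ∑ f : Fin m → X, (∏ j, PX (f j)) * g (f i) = ∑ x, PX x * g x := by
  classical
  set F : Fin m → X → ℝ := fun j x => if j = i then PX x * g x else PX x with hF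
  have key : ∀ f : Fin m → X, (∏ j, PX (f j)) * g (f i) = ∏ j, F j (f j) := by
    intro f
    rw [← Finset.mul_prod_erase Finset.univ (fun j => F j (f j)) (Finset.mem_univ i),
        ← Finset.mul_prod_erase Finset.univ (fun j => PX (f j)) (Finset.mem_univ i)]
    have : ∏ j ∈ Finset.univ.erase i, F j (f j) = ∏ j ∈ Finset.univ.erase i, PX (f j) := by
      apply Finset.prod_congr rfl
      intro j hj
      simp [hF, Finset.ne_of_mem_erase hj]
    rw [this]
    simp [hF]
    ring
  rw [Finset.sum_congr rfl (fun f _ => key f), sum_pi_prod]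
  calc ∏ j, ∑ x, F j x = ∏ j, (if j = i then (∑ x, PX x * g x) else 1) := by
        apply Finset.prod_congr rfl
        intro j _
        by_cases h : j = i <;> simp [hF, h, h1]
    _ = ∑ x, PX x * g x := by simp

lemma exp_two {m : ℕ} (PX : X → ℝ) (h1 : ∑ x, PX x = 1) (i k : Fin m) (hik : k ≠ i)
    (g h : X → ℝ) :
    ∑ f : Fin m → X, (∏ j, PX (f j)) * (g (f i) * h (f k)) =
      (∑ x, PX x * g x) * (∑ x, PX x * h x) := by
  classical
  set F : Fin m → X → ℝ := fun j x =>
    if j = i then PX x * g x else if j = k then PX x * h x else PX x with hF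
  have hki : k ∈ Finset.univ.erase i := Finset.mem_erase.2 ⟨hik, Finset.mem_univ k⟩
  have key : ∀ f : Fin m → X, (∏ j, PX (f j)) * (g (f i) * h (f k)) = ∏ j, F j (f j) := by
    intro f
    rw [← Finset.mul_prod_erase Finset.univ (fun j => F j (f j)) (Finset.mem_univ i),
        ← Finset.mul_prod_erase _ (fun j => F j (f j)) hki,
        ← Finset.mul_prod_erase Finset.univ (fun j => PX (f j)) (Finset.mem_univ i),
        ← Finset.mul_prod_erase _ (fun j => PX (f j)) hki]
    have : ∏ j ∈ (Finset.univ.erase i).erase k, F j (f j)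
        = ∏ j ∈ (Finset.univ.erase i).erase k, PX (f j) := by
      apply Finset.prod_congr rfl
      intro j hj
      have hj1 := Finset.ne_of_mem_erase hj
      have hj2 := Finset.ne_of_mem_erase (Finset.mem_of_mem_erase hj)
      simp [hF, hj1, hj2]
    rw [this]
    simp [hF, hik]
    ring
  rw [Finset.sum_congr rfl (fun f _ => key f), sum_pi_prod]
  rw [← Finset.mul_prod_erase Finset.univ (fun j => ∑ x, F j x) (Finset.mem_univ i),
      ← Finset.mul_prod_erase _ (fun j => ∑ x, F j x) hki]
  have h3 : ∏ j ∈ (Finset.univ.erase i).erase k, ∑ x, F j x = 1 := by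
    apply Finset.prod_eq_one
    intro j hj
    have hj1 := Finset.ne_of_mem_erase hj
    have hj2 := Finset.ne_of_mem_erase (Finset.mem_of_mem_erase hj)
    simp [hF, hj1, hj2, h1]
  rw [h3]
  simp [hF, hik]

end Aux

/-- Random-coding error bound: for a codebook of `m` i.i.d. `P_X`-codewords and the
randomized decoder selecting message `j` with probability `Φ(f(j),y)`, the average
error probability is at most `(m-1)·∑ Φ d(P_X × P_Y) + ε'`. -/
theorem random_coding_bound {X Y : Type*} [Fintype X] [Fintype Y]
    (W : X → Y → ℝ) (hW : ∀ x, IsPmf (W x))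
    (PX : X → ℝ) (hPX : IsPmf PX)
    (m : ℕ) (hm : 1 ≤ m) (ε' : ℝ) (hε' : 0 ≤ ε')
    (Φ : X → Y → ℝ) (hΦ : ∀ x y, 0 ≤ Φ x y ∧ Φ x y ≤ 1)
    (hcov : 1 - ε' ≤ ∑ x, ∑ y, Φ x y * (PX x * W x y)) :
    ∑ f : Fin m → X, (∏ j : Fin m, PX (f j)) *
        ((1 / m : ℝ) * ∑ i : Fin m, ∑ y, W (f i) y *
          (1 - Φ (f i) y * ∏ j ∈ Finset.univ.erase i, (1 - Φ (f j) y)))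
      ≤ (m - 1 : ℝ) * (∑ x, ∑ y, Φ x y * (PX x * (∑ x', PX x' * W x' y))) + ε' := by
  classical
  obtain ⟨hPX0, hPX1⟩ := hPX
  have hm0 : (m : ℝ) ≠ 0 := by positivity
  -- abbreviations (as plain terms)
  set c0 : ℝ := ∑ x, ∑ y, Φ x y * (PX x * W x y) with hc0
  set S : ℝ := ∑ x, ∑ y, Φ x y * (PX x * (∑ x', PX x' * W x' y)) with hS
  -- A and B
  set A : Fin m → (Fin m → X) → ℝ :=
    fun i f => ∑ y, W (f i) y * (1 - Φ (f i) y) with hA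
  set B : Fin m → (Fin m → X) → ℝ :=
    fun i f => ∑ k ∈ Finset.univ.erase i, ∑ y, W (f i) y * Φ (f k) y with hB
  -- Step 1: pointwise bound
  have step1 : ∑ f : Fin m → X, (∏ j : Fin m, PX (f j)) *
        ((1 / m : ℝ) * ∑ i : Fin m, ∑ y, W (f i) y *
          (1 - Φ (f i) y * ∏ j ∈ Finset.univ.erase i, (1 - Φ (f j) y)))
      ≤ ∑ f : Fin m → X, (∏ j : Fin m, PX (f j)) *
        ((1 / m : ℝ) * ∑ i : Fin m, (A i f + B i f)) := by
    apply Finset.sum_le_sum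
    intro f _
    apply mul_le_mul_of_nonneg_left _ (Finset.prod_nonneg fun j _ => hPX0 _)
    apply mul_le_mul_of_nonneg_left _ (by positivity)
    apply Finset.sum_le_sum
    intro i _
    calc ∑ y, W (f i) y * (1 - Φ (f i) y * ∏ j ∈ Finset.univ.erase i, (1 - Φ (f j) y))
        ≤ ∑ y, W (f i) y * ((1 - Φ (f i) y) + ∑ j ∈ Finset.univ.erase i, Φ (f j) y) := by
          apply Finset.sum_le_sum
          intro y _
          apply mul_le_mul_of_nonneg_left _ ((hW (f i)).1 y)
          have hw := weierstrass (Finset.univ.erase i) (fun j => Φ (f j) y)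
            (fun j _ => hΦ (f j) y)
          have ha := hΦ (f i) y
          have hsum : 0 ≤ ∑ j ∈ Finset.univ.erase i, Φ (f j) y :=
            Finset.sum_nonneg fun j _ => (hΦ (f j) y).1
          nlinarith [hw, ha.1, ha.2, hsum]
      _ = A i f + B i f := by
          rw [hA, hB]
          simp only [mul_add, Finset.sum_add_distrib, Finset.mul_sum]
          congr 1
          rw [Finset.sum_comm]
  -- evaluation of the A-part
  have evalA : ∀ i : Fin m,
      ∑ f : Fin m → X, (∏ j : Fin m, PX (f j)) * A i f = 1 - c0 := by
    intro i
    rw [hA]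
    rw [exp_one PX hPX1 i (fun x => ∑ y, W x y * (1 - Φ x y))]
    have hx : ∀ x : X, PX x * (∑ y, W x y * (1 - Φ x y))
        = PX x - ∑ y, Φ x y * (PX x * W x y) := by
      intro x
      have h2 : ∑ y, W x y * (1 - Φ x y) = 1 - ∑ y, Φ x y * W x y := by
        have : ∑ y, W x y * (1 - Φ x y) = (∑ y, W x y) - ∑ y, Φ x y * W x y := by
          rw [← Finset.sum_sub_distrib]
          apply Finset.sum_congr rfl
          intros; ring
        rw [this, (hW x).2]
      rw [h2, mul_sub, mul_one, Finset.mul_sum]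
      congr 1
      apply Finset.sum_congr rfl
      intros; ring
    rw [Finset.sum_congr rfl (fun x _ => hx x), Finset.sum_sub_distrib, hPX1, hc0]
  -- evaluation of the B-part
  have evalB : ∀ i : Fin m,
      ∑ f : Fin m → X, (∏ j : Fin m, PX (f j)) * B i f = ((m : ℝ) - 1) * S := by
    intro i
    have hterm : ∀ k ∈ Finset.univ.erase i,
        ∑ f : Fin m → X, (∏ j : Fin m, PX (f j)) * (∑ y, W (f i) y * Φ (f k) y)
          = ∑ y, (∑ x, PX x * W x y) * (∑ x, PX x * Φ x y) := by
      intro k hk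
      have hik : k ≠ i := Finset.ne_of_mem_erase hk
      calc ∑ f : Fin m → X, (∏ j : Fin m, PX (f j)) * (∑ y, W (f i) y * Φ (f k) y)
          = ∑ f : Fin m → X, ∑ y, (∏ j : Fin m, PX (f j)) * (W (f i) y * Φ (f k) y) := by
            apply Finset.sum_congr rfl
            intros; rw [Finset.mul_sum]
        _ = ∑ y, ∑ f : Fin m → X, (∏ j : Fin m, PX (f j)) * (W (f i) y * Φ (f k) y) :=
            Finset.sum_comm
        _ = ∑ y, (∑ x, PX x * W x y) * (∑ x, PX x * Φ x y) := by
            apply Finset.sum_congr rfl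
            intro y _
            exact exp_two PX hPX1 i k hik (fun x => W x y) (fun x => Φ x y)
    have hBsum : ∑ f : Fin m → X, (∏ j : Fin m, PX (f j)) * B i f
        = ∑ k ∈ Finset.univ.erase i,
            ∑ f : Fin m → X, (∏ j : Fin m, PX (f j)) * (∑ y, W (f i) y * Φ (f k) y) := by
      rw [hB]
      simp only [Finset.mul_sum]
      rw [Finset.sum_comm]
    rw [hBsum, Finset.sum_congr rfl hterm, Finset.sum_const]
    have hcard : (Finset.univ.erase i).card = m - 1 := by
      rw [Finset.card_erase_of_mem (Finset.mem_univ i), Finset.card_univ, Fintype.card_fin]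
    rw [hcard]
    have hScomm : S = ∑ y, (∑ x, PX x * W x y) * (∑ x, PX x * Φ x y) := by
      rw [hS, Finset.sum_comm]
      apply Finset.sum_congr rfl
      intro y _
      have : (∑ x, PX x * W x y) * (∑ x, PX x * Φ x y)
          = ∑ x, (∑ x', PX x' * W x' y) * (PX x * Φ x y) := Finset.mul_sum _ _ _
      rw [this]
      apply Finset.sum_congr rfl
      intros; ring
    rw [← hScomm, nsmul_eq_mul]
    congr 1
    push_cast [Nat.cast_sub hm]
    ring
  -- put it together
  have key : ∑ f : Fin m → X, (∏ j : Fin m, PX (f j)) *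
        ((1 / m : ℝ) * ∑ i : Fin m, (A i f + B i f))
      = (1 - c0) + ((m : ℝ) - 1) * S := by
    have h1 : ∀ f : Fin m → X, (∏ j : Fin m, PX (f j)) *
        ((1 / m : ℝ) * ∑ i : Fin m, (A i f + B i f))
        = (1 / m : ℝ) * ∑ i : Fin m, ((∏ j : Fin m, PX (f j)) * A i f
            + (∏ j : Fin m, PX (f j)) * B i f) := by
      intro f
      simp only [Finset.mul_sum]
      apply Finset.sum_congr rfl
      intros; ring
    rw [Finset.sum_congr rfl (fun f _ => h1 f), ← Finset.mul_sum, Finset.sum_comm]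
    have h2 : ∀ i : Fin m, ∑ f : Fin m → X,
        ((∏ j : Fin m, PX (f j)) * A i f + (∏ j : Fin m, PX (f j)) * B i f)
        = (1 - c0) + ((m : ℝ) - 1) * S := by
      intro i
      rw [Finset.sum_add_distrib, evalA i, evalB i]
    rw [Finset.sum_congr rfl (fun i _ => h2 i), Finset.sum_const, Finset.card_univ,
        Fintype.card_fin, nsmul_eq_mul]
    field_simp
    try ring
  have hfin : 1 - c0 ≤ ε' := by linarith [hcov]
  calc ∑ f : Fin m → X, (∏ j : Fin m, PX (f j)) *
        ((1 / m : ℝ) * ∑ i : Fin m, ∑ y, W (f i) y *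
          (1 - Φ (f i) y * ∏ j ∈ Finset.univ.erase i, (1 - Φ (f j) y)))
      ≤ (1 - c0) + ((m : ℝ) - 1) * S := by rw [← key]; exact step1
    _ ≤ ((m : ℝ) - 1) * S + ε' := by linarith
end

section
/- (Lower bound direction of Lemma 2) Let (P_n) and (Q_n) be sequences of probability measures on measurable spaces (Ω_n, F_n). Suppose a < {P_n}-liminf (1/n) log(dP_n/dQ_n), meaning lim_{n→∞} P_n({ (1/n) log(dP_n/dQ_n) < a }) = 0. Then lim_{δ↓0} liminf_{n→∞} (1/n) D₀^δ(P_n‖Q_n) ≥ a. -/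
open scoped BigOperators Classical

open Filter

/-- Lower bound direction of Lemma 2: if `(1/n)·log₂(dPₙ/dQₙ) ≥ a` with
`Pₙ`-probability tending to one, then `liminf (1/n)·D₀^δ(Pₙ‖Qₙ) ≥ a` for every
`δ > 0` (hence also in the limit `δ ↓ 0`). -/
theorem liminf_D0smooth_ge {Ω : ℕ → Type*} [∀ n, Fintype (Ω n)]
    (P Q : ∀ n, Ω n → ℝ) (hP : ∀ n, IsPmf (P n)) (hQ : ∀ n, IsPmf (Q n))
    (habs : ∀ n x, P n x ≠ 0 → Q n x ≠ 0)
    (a : ℝ)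
    (ha : Tendsto (fun n : ℕ =>
        ∑ x ∈ Finset.univ.filter
          (fun x => (1 / (n:ℝ)) * Real.logb 2 (P n x / Q n x) < a), P n x)
      atTop (nhds 0)) :
    ∀ δ : ℝ, 0 < δ →
      (a : EReal) ≤ liminf
        (fun n : ℕ => ((1 / (n:ℝ) : ℝ) : EReal) * D0smooth (P n) (Q n) δ) atTop := by
  intro δ hδ
  have key : ∀ᶠ n : ℕ in atTop,
      (a : EReal) ≤ ((1 / (n:ℝ) : ℝ) : EReal) * D0smooth (P n) (Q n) δ := by
    have hev : ∀ᶠ n : ℕ in atTop,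
        ∑ x ∈ Finset.univ.filter
          (fun x => (1 / (n:ℝ)) * Real.logb 2 (P n x / Q n x) < a), P n x < δ :=
      ha.eventually (gt_mem_nhds hδ)
    filter_upwards [hev, eventually_ge_atTop 1] with n hn hn1
    have hnpos : (0:ℝ) < (n:ℝ) := by exact_mod_cast hn1
    classical
    -- the test function
    set A : Ω n → Prop := fun x =>
      a ≤ (1 / (n:ℝ)) * Real.logb 2 (P n x / Q n x) ∧ 0 < P n x with hAdef
    set Φ : Ω n → ℝ := fun x => if A x then 1 else 0 with hΦdef
    have hΦ01 : ∀ x, 0 ≤ Φ x ∧ Φ x ≤ 1 := by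
      intro x
      by_cases h : A x
      · rw [hΦdef]; simp only [if_pos h]; norm_num
      · rw [hΦdef]; simp only [if_neg h]; norm_num
    have hPsum : 1 - δ ≤ ∑ x, Φ x * P n x := by
      have hsplit : ∑ x, Φ x * P n x
          = ∑ x ∈ Finset.univ.filter
              (fun x => ¬ ((1 / (n:ℝ)) * Real.logb 2 (P n x / Q n x) < a)), P n x := by
        rw [Finset.sum_filter]
        apply Finset.sum_congr rfl
        intro x _
        by_cases h1 : (1 / (n:ℝ)) * Real.logb 2 (P n x / Q n x) < a
        · have hA : ¬ A x := fun h2 => absurd h1 (not_lt.2 h2.1)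
          rw [hΦdef]; simp only [if_neg hA, if_neg (not_not.2 h1), zero_mul]
        · by_cases h2 : 0 < P n x
          · have hA : A x := ⟨not_lt.1 h1, h2⟩
            rw [hΦdef]; simp only [if_pos hA, if_pos h1, one_mul]
          · have hz : P n x = 0 := le_antisymm (not_lt.1 h2) ((hP n).1 x)
            by_cases hA : A x
            · rw [hΦdef]; simp [if_pos hA, hz]
            · rw [hΦdef]; simp [if_neg hA, hz]
      have htotal := Finset.sum_filter_add_sum_filter_not Finset.univ
        (fun x => (1 / (n:ℝ)) * Real.logb 2 (P n x / Q n x) < a) (P n)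
      rw [(hP n).2] at htotal
      rw [hsplit]; linarith
    -- bound on the Q-sum
    have hQbound : ∑ x, Φ x * Q n x ≤ (2:ℝ) ^ (-((n:ℝ) * a)) := by
      have hterm : ∀ x, Φ x * Q n x ≤ (2:ℝ) ^ (-((n:ℝ) * a)) * P n x := by
        intro x
        by_cases h : A x
        · have hQpos : 0 < Q n x :=
            lt_of_le_of_ne ((hQ n).1 x) (Ne.symm (habs n x (ne_of_gt h.2)))
          have hlog : (n:ℝ) * a ≤ Real.logb 2 (P n x / Q n x) := by
            have h1 := h.1
            rw [div_mul_eq_mul_div, le_div_iff₀ hnpos, mul_comm] at h1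
            simpa using h1
          have hratio : (2:ℝ) ^ ((n:ℝ) * a) ≤ P n x / Q n x :=
            (Real.le_logb_iff_rpow_le one_lt_two (div_pos h.2 hQpos)).1 hlog
          have hQP : Q n x * (2:ℝ) ^ ((n:ℝ) * a) ≤ P n x := by
            rw [le_div_iff₀ hQpos] at hratio; linarith
          have h2 : Q n x ≤ (2:ℝ) ^ (-((n:ℝ) * a)) * P n x := by
            rw [Real.rpow_neg (by norm_num : (0:ℝ) ≤ 2), inv_mul_eq_div,
              le_div_iff₀ (Real.rpow_pos_of_pos two_pos _)]
            exact hQP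
          rw [hΦdef]; simpa only [if_pos h, one_mul] using h2
        · rw [hΦdef]; simp only [if_neg h, zero_mul]
          exact mul_nonneg (Real.rpow_nonneg (by norm_num) _) ((hP n).1 x)
      calc ∑ x, Φ x * Q n x ≤ ∑ x, (2:ℝ) ^ (-((n:ℝ) * a)) * P n x :=
            Finset.sum_le_sum (fun x _ => hterm x)
        _ = (2:ℝ) ^ (-((n:ℝ) * a)) := by
            rw [← Finset.mul_sum, (hP n).2, mul_one]
    -- negLog2 bound
    have hneg : (((n:ℝ) * a : ℝ) : EReal) ≤ negLog2 (∑ x, Φ x * Q n x) := by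
      unfold negLog2
      by_cases h0 : (∑ x, Φ x * Q n x) = 0
      · simp [h0]
      · rw [if_neg h0]
        have hpos : 0 < ∑ x, Φ x * Q n x := by
          have hge : 0 ≤ ∑ x, Φ x * Q n x :=
            Finset.sum_nonneg (fun x _ => mul_nonneg (hΦ01 x).1 ((hQ n).1 x))
          exact lt_of_le_of_ne hge (Ne.symm h0)
        have hlb : Real.logb 2 (∑ x, Φ x * Q n x) ≤ -((n:ℝ) * a) := by
          calc Real.logb 2 (∑ x, Φ x * Q n x)
              ≤ Real.logb 2 ((2:ℝ) ^ (-((n:ℝ) * a))) :=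
                Real.logb_le_logb_of_le one_lt_two hpos hQbound
            _ = -((n:ℝ) * a) := Real.logb_rpow two_pos (by norm_num)
        exact_mod_cast (by linarith : (n:ℝ) * a ≤ -Real.logb 2 (∑ x, Φ x * Q n x))
    -- membership in the sSup set
    have hD : (((n:ℝ) * a : ℝ) : EReal) ≤ D0smooth (P n) (Q n) δ :=
      hneg.trans (le_sSup ⟨Φ, hΦ01, hPsum, rfl⟩)
    -- conclude for this n
    have hinv : (0:ℝ) < 1 / (n:ℝ) := by positivity
    generalize hX : D0smooth (P n) (Q n) δ = X at hD ⊢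
    induction X using EReal.rec with
    | bot => exact (EReal.coe_ne_bot _ (le_bot_iff.1 hD)).elim
    | coe x =>
        have hx : (n:ℝ) * a ≤ x := by exact_mod_cast hD
        rw [← EReal.coe_mul, EReal.coe_le_coe_iff]
        rw [← mul_le_mul_iff_right₀ hnpos]
        calc (n:ℝ) * a ≤ x := hx
          _ = (n:ℝ) * (1 / (n:ℝ) * x) := by field_simp
    | top =>
        rw [EReal.coe_mul_top_of_pos hinv]
        exact le_top
  exact le_liminf_of_le (by isBoundedDefault) key
end

section
/- (Upper bound direction of Lemma 2) Let (P_n) and (Q_n) be sequences of probability measures on (Ω_n, F_n) with P_n ≪ Q_n. Suppose b > {P_n}-liminf (1/n) log(dP_n/dQ_n), i.e., limsup_{n→∞} P_n({ (1/n) log(dP_n/dQ_n) ≤ b }) = c for some c ∈ (0,1]. Then for every δ ∈ (0,c), liminf_{n→∞} (1/n) D₀^δ(P_n‖Q_n) ≤ b; hence lim_{δ↓0} liminf_{n→∞} (1/n) D₀^δ(P_n‖Q_n) ≤ b. -/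
open scoped BigOperators Classical

open Filter

/-- Key single-`n` bound: any admissible test `Φ` keeps mass at least
`∑_{x∈A} P x - δ` on `A`, where `Q ≥ P·2^{-B}`, so `∑ Φ Q ≥ η·2^{-B}`. -/
lemma D0smooth_le_aux {Ω : Type*} [Fintype Ω] (P Q : Ω → ℝ)
    (hP : IsPmf P) (hQnn : ∀ x, 0 ≤ Q x) (A : Finset Ω) (B η δ : ℝ) (hη : 0 < η)
    (hQA : ∀ x ∈ A, P x * (2:ℝ) ^ (-B) ≤ Q x)
    (hPA : η ≤ ∑ x ∈ A, P x - δ) :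
    D0smooth P Q δ ≤ ((B - Real.logb 2 η : ℝ) : EReal) := by
  refine sSup_le ?_
  rintro r ⟨Φ, hΦ, hΦP, rfl⟩
  have h2B : (0:ℝ) < (2:ℝ) ^ (-B) := Real.rpow_pos_of_pos (by norm_num) _
  -- mass of Φ·P on A
  have hsplit : ∑ x, Φ x * P x = ∑ x ∈ A, Φ x * P x + ∑ x ∈ Aᶜ, Φ x * P x :=
    (Finset.sum_add_sum_compl A _).symm
  have hcompl : ∑ x ∈ Aᶜ, Φ x * P x ≤ ∑ x ∈ Aᶜ, P x := by
    refine Finset.sum_le_sum fun x _ => ?_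
    nlinarith [(hΦ x).1, (hΦ x).2, hP.1 x]
  have hsumP : ∑ x ∈ A, P x + ∑ x ∈ Aᶜ, P x = 1 := by
    rw [Finset.sum_add_sum_compl A P]; exact hP.2
  have hAmass : η ≤ ∑ x ∈ A, Φ x * P x := by
    have : 1 - δ ≤ ∑ x ∈ A, Φ x * P x + ∑ x ∈ Aᶜ, P x := by
      calc 1 - δ ≤ ∑ x, Φ x * P x := hΦP
        _ = _ := hsplit
        _ ≤ _ := by linarith
    linarith
  have hkey : η * (2:ℝ) ^ (-B) ≤ ∑ x, Φ x * Q x := by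
    calc η * (2:ℝ) ^ (-B) ≤ (∑ x ∈ A, Φ x * P x) * (2:ℝ) ^ (-B) := by
          exact mul_le_mul_of_nonneg_right hAmass h2B.le
      _ = ∑ x ∈ A, Φ x * (P x * (2:ℝ) ^ (-B)) := by
          rw [Finset.sum_mul]; exact Finset.sum_congr rfl fun x _ => by ring
      _ ≤ ∑ x ∈ A, Φ x * Q x := by
          refine Finset.sum_le_sum fun x hx => ?_
          exact mul_le_mul_of_nonneg_left (hQA x hx) (hΦ x).1
      _ ≤ ∑ x, Φ x * Q x := by
          refine Finset.sum_le_sum_of_subset_of_nonneg (Finset.subset_univ A)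
            fun x _ _ => mul_nonneg (hΦ x).1 (hQnn x)
  have hpos : (0:ℝ) < ∑ x, Φ x * Q x := lt_of_lt_of_le (mul_pos hη h2B) hkey
  rw [negLog2, if_neg (ne_of_gt hpos)]
  rw [EReal.coe_le_coe_iff]
  have hlog : Real.logb 2 (η * (2:ℝ) ^ (-B)) ≤ Real.logb 2 (∑ x, Φ x * Q x) :=
    Real.logb_le_logb_of_le (by norm_num) (mul_pos hη h2B) hkey
  have : Real.logb 2 (η * (2:ℝ) ^ (-B)) = Real.logb 2 η - B := by
    rw [Real.logb_mul (ne_of_gt hη) (ne_of_gt h2B),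
      Real.logb_rpow (by norm_num : (0:ℝ) < 2) (by norm_num)]
    ring
  linarith

/-- Upper bound direction of Lemma 2: if
`limsup Pₙ({(1/n)·log₂(dPₙ/dQₙ) ≤ b}) = c` with `c ∈ (0,1]`, then for every
`δ ∈ (0,c)`, `liminf (1/n)·D₀^δ(Pₙ‖Qₙ) ≤ b`. -/
theorem liminf_D0smooth_le {Ω : ℕ → Type*} [∀ n, Fintype (Ω n)]
    (P Q : ∀ n, Ω n → ℝ) (hP : ∀ n, IsPmf (P n)) (hQ : ∀ n, IsPmf (Q n))
    (habs : ∀ n x, P n x ≠ 0 → Q n x ≠ 0)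
    (b c : ℝ) (hc0 : 0 < c) (hc1 : c ≤ 1)
    (hb : limsup (fun n : ℕ =>
        ∑ x ∈ Finset.univ.filter
          (fun x => (1 / (n:ℝ)) * Real.logb 2 (P n x / Q n x) ≤ b), P n x)
      atTop = c) :
    ∀ δ : ℝ, 0 < δ → δ < c →
      liminf (fun n : ℕ => ((1 / (n:ℝ) : ℝ) : EReal) * D0smooth (P n) (Q n) δ) atTop
        ≤ (b : EReal) := by
  intro δ hδ0 hδc
  set g : ℕ → ℝ := fun n =>
    ∑ x ∈ Finset.univ.filter
      (fun x => (1 / (n:ℝ)) * Real.logb 2 (P n x / Q n x) ≤ b), P n x with hg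
  set η : ℝ := (c - δ) / 2 with hηdef
  have hη : 0 < η := by simp [hηdef]; linarith
  -- it suffices to prove `liminf ≤ r` for every real `r > b`
  refine le_of_forall_gt_imp_ge_of_dense fun y hy => ?_
  obtain ⟨r, hbr, hry⟩ := EReal.exists_between_coe_real hy
  refine le_trans ?_ hry.le
  have hbr' : b < r := EReal.coe_lt_coe_iff.mp hbr
  -- frequently, g n > (c+δ)/2, i.e. g n - δ ≥ η
  have hcobdd : IsCoboundedUnder (· ≤ ·) atTop g := by
    refine IsBoundedUnder.isCoboundedUnder_le ⟨0, ?_⟩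
    rw [eventually_map]
    filter_upwards with n
    exact Finset.sum_nonneg fun x _ => (hP n).1 x
  have hfreq : ∃ᶠ n in atTop, (c + δ) / 2 < g n := by
    apply frequently_lt_of_lt_limsup hcobdd
    rw [hb]; exact EReal.coe_lt_coe_iff.mp (by exact_mod_cast (by linarith : (c+δ)/2 < c))
  -- eventually, (-logb 2 η)/n < r - b
  have htend : Filter.Tendsto (fun n : ℕ => (-Real.logb 2 η) / n) atTop (nhds 0) :=
    tendsto_const_div_atTop_nhds_zero_nat _
  have hev : ∀ᶠ n : ℕ in atTop, (-Real.logb 2 η) / (n:ℝ) < r - b :=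
    htend.eventually (eventually_lt_nhds (by linarith : (0:ℝ) < r - b))
  have hev1 : ∀ᶠ n in atTop, 1 ≤ n := eventually_ge_atTop 1
  refine liminf_le_of_frequently_le' ?_
  refine (hfreq.and_eventually (hev.and hev1)).mono ?_
  rintro n ⟨hgn, hlog, hn1⟩
  have hnpos : (0:ℝ) < n := by exact_mod_cast hn1
  -- per-n bound via the auxiliary lemma
  set A : Finset (Ω n) := Finset.univ.filter
      (fun x => (1 / (n:ℝ)) * Real.logb 2 (P n x / Q n x) ≤ b) with hA
  have hQA : ∀ x ∈ A, P n x * (2:ℝ) ^ (-((n:ℝ) * b)) ≤ Q n x := by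
    intro x hx
    rw [hA, Finset.mem_filter] at hx
    rcases eq_or_lt_of_le ((hP n).1 x) with h0 | hpos
    · rw [← h0]; simpa using (hQ n).1 x
    · have hQpos : 0 < Q n x := lt_of_le_of_ne ((hQ n).1 x)
        (Ne.symm (habs n x (ne_of_gt hpos)))
      have hratio : Real.logb 2 (P n x / Q n x) ≤ (n:ℝ) * b := by
        have := hx.2
        rw [div_mul_eq_mul_div, div_le_iff₀ hnpos, one_mul] at this
        linarith [this]
      have hPQpos : 0 < P n x / Q n x := div_pos hpos hQpos
      have : P n x / Q n x ≤ (2:ℝ) ^ ((n:ℝ) * b) :=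
        (Real.logb_le_iff_le_rpow (by norm_num) hPQpos).mp hratio
      have h2 : (0:ℝ) < (2:ℝ) ^ ((n:ℝ) * b) := Real.rpow_pos_of_pos (by norm_num) _
      rw [div_le_iff₀ hQpos] at this
      rw [Real.rpow_neg (by norm_num : (0:ℝ) ≤ 2)]
      rw [mul_inv_le_iff₀ h2]
      linarith [this]
  have hPA : η ≤ ∑ x ∈ A, P n x - δ := by
    have : (c + δ)/2 < ∑ x ∈ A, P n x := hgn
    rw [hηdef]; linarith
  have hbound := D0smooth_le_aux (P n) (Q n) (hP n) ((hQ n).1) A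
    ((n:ℝ) * b) η δ hη hQA hPA
  calc ((1 / (n:ℝ) : ℝ) : EReal) * D0smooth (P n) (Q n) δ
      ≤ ((1 / (n:ℝ) : ℝ) : EReal) * (((n:ℝ) * b - Real.logb 2 η : ℝ) : EReal) := by
        apply mul_le_mul_of_nonneg_left hbound
        exact_mod_cast (by positivity : (0:ℝ) ≤ 1 / (n:ℝ))
    _ = ((1 / (n:ℝ) * ((n:ℝ) * b - Real.logb 2 η) : ℝ) : EReal) := by
        rw [← EReal.coe_mul]
    _ ≤ (r : EReal) := by
        rw [EReal.coe_le_coe_iff]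
        have : 1 / (n:ℝ) * ((n:ℝ) * b - Real.logb 2 η)
            = b + (-Real.logb 2 η) / n := by
          field_simp
          ring
        rw [this]; linarith [hlog]
end

section
/- (Smooth 0-divergence of i.i.d. products) Let P and Q be probability mass functions on a finite set Ω with P ≪ Q. Then lim_{δ↓0} liminf_{n→∞} (1/n) D₀^δ(P^{×n} ‖ Q^{×n}) = D(P‖Q), where P^{×n}, Q^{×n} are n-fold product distributions and D(P‖Q) = ∑_x P(x) log₂(P(x)/Q(x)) is the relative entropy. -/
open scoped BigOperators Classical

lemma prodsum {Ω : Type*} [Fintype Ω] (n : ℕ) (a : Fin n → Ω → ℝ) :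
    ∑ v : Fin n → Ω, ∏ k, a k (v k) = ∏ k, ∑ x, a k x := by
  rw [Finset.prod_univ_sum, Fintype.piFinset_univ]

lemma E1 {Ω : Type*} [Fintype Ω] {P : Ω → ℝ} (hP1 : ∑ x, P x = 1)
    (n : ℕ) (g : Ω → ℝ) (i : Fin n) :
    ∑ v : Fin n → Ω, (∏ k, P (v k)) * g (v i) = ∑ x, P x * g x := by
  have : ∀ v : Fin n → Ω, (∏ k, P (v k)) * g (v i)
      = ∏ k, (P (v k) * if k = i then g (v k) else 1) := by
    intro v
    rw [Finset.prod_mul_distrib]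
    congr 1
    simp
  simp_rw [this]
  rw [prodsum n (fun k x => P x * if k = i then g x else 1)]
  have : ∀ k : Fin n, (∑ x, P x * if k = i then g x else 1)
      = if k = i then ∑ x, P x * g x else 1 := by
    intro k
    by_cases h : k = i <;> simp [h, hP1]
  simp_rw [this]
  simp

lemma E2 {Ω : Type*} [Fintype Ω] {P : Ω → ℝ} (hP1 : ∑ x, P x = 1)
    (n : ℕ) (g g' : Ω → ℝ) (i j : Fin n) (hij : i ≠ j) :
    ∑ v : Fin n → Ω, (∏ k, P (v k)) * (g (v i) * g' (v j))
      = (∑ x, P x * g x) * (∑ x, P x * g' x) := by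
  have key : ∀ v : Fin n → Ω, (∏ k, P (v k)) * (g (v i) * g' (v j))
      = ∏ k, (P (v k) * ((if k = i then g (v k) else 1) * (if k = j then g' (v k) else 1))) := by
    intro v
    rw [Finset.prod_mul_distrib, Finset.prod_mul_distrib]
    congr 1
    congr 1
    · simp
    · simp
  simp_rw [key]
  rw [prodsum n (fun k x => P x * ((if k = i then g x else 1) * if k = j then g' x else 1))]
  have : ∀ k : Fin n, (∑ x, P x * ((if k = i then g x else 1) * (if k = j then g' x else 1)))
      = (if k = i then ∑ x, P x * g x else 1) * (if k = j then ∑ x, P x * g' x else 1) := by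
    intro k
    by_cases h1 : k = i
    · subst h1
      simp [hij, hP1]
    · by_cases h2 : k = j <;> simp [h1, h2, hP1, Ne.symm hij]
  simp_rw [this]
  rw [Finset.prod_mul_distrib]
  simp

lemma mass_one {Ω : Type*} [Fintype Ω] {P : Ω → ℝ} (hP1 : ∑ x, P x = 1) (n : ℕ) :
    ∑ v : Fin n → Ω, ∏ k, P (v k) = 1 := by
  rw [prodsum n (fun _ x => P x)]
  simp [hP1]

lemma variance_eq {Ω : Type*} [Fintype Ω] {P : Ω → ℝ} (hP1 : ∑ x, P x = 1)
    (n : ℕ) (h : Ω → ℝ) (hmean : ∑ x, P x * h x = 0) :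
    ∑ v : Fin n → Ω, (∏ k, P (v k)) * (∑ k, h (v k))^2
      = n * ∑ x, P x * (h x)^2 := by
  have expand : ∀ v : Fin n → Ω, (∏ k, P (v k)) * (∑ k, h (v k))^2
      = ∑ i, ∑ j, (∏ k, P (v k)) * (h (v i) * h (v j)) := by
    intro v
    rw [sq, Finset.sum_mul_sum]
    rw [Finset.mul_sum]
    congr 1; ext i
    rw [Finset.mul_sum]
  simp_rw [expand]
  rw [Finset.sum_comm]
  have inner : ∀ i : Fin n, ∑ v : Fin n → Ω, ∑ j, (∏ k, P (v k)) * (h (v i) * h (v j))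
      = ∑ j, ∑ v : Fin n → Ω, (∏ k, P (v k)) * (h (v i) * h (v j)) :=
    fun i => Finset.sum_comm
  simp_rw [inner]
  have term : ∀ i j : Fin n, (∑ v : Fin n → Ω, (∏ k, P (v k)) * (h (v i) * h (v j)))
      = if i = j then ∑ x, P x * (h x)^2 else 0 := by
    intro i j
    by_cases hij : i = j
    · subst hij
      simp only [if_pos rfl]
      have : ∀ v : Fin n → Ω, (∏ k, P (v k)) * (h (v i) * h (v i))
          = (∏ k, P (v k)) * ((fun x => (h x)^2) (v i)) := by
        intro v; simp [sq]
      simp_rw [this]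
      exact E1 hP1 n (fun x => (h x)^2) i
    · rw [if_neg hij, E2 hP1 n h h i j hij, hmean, zero_mul]
  simp_rw [term]
  simp

/-- Chebyshev-type bound on the product space. -/
lemma chebyshev {Ω : Type*} [Fintype Ω] {P : Ω → ℝ} (hP0 : ∀ x, 0 ≤ P x)
    (hP1 : ∑ x, P x = 1) (n : ℕ) (f : Ω → ℝ) {ε : ℝ} (hε : 0 < ε)
    (B : Finset (Fin n → Ω))
    (hB : ∀ v ∈ B, (∏ k, P (v k)) = 0 ∨
      (n : ℝ) * ε ≤ |(∑ k, f (v k)) - n * (∑ x, P x * f x)|) :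
    ((n : ℝ) * ε)^2 * ∑ v ∈ B, ∏ k, P (v k)
      ≤ n * ∑ x, P x * (f x - ∑ y, P y * f y)^2 := by
  set μ := ∑ x, P x * f x with hμ
  have hmean : ∑ x, P x * (f x - μ) = 0 := by
    simp_rw [mul_sub]
    rw [Finset.sum_sub_distrib, ← hμ, ← Finset.sum_mul, hP1, one_mul, sub_self]
  have hvar := variance_eq hP1 n (fun x => f x - μ) hmean
  have hSn : ∀ v : Fin n → Ω, (∑ k, (f (v k) - μ)) = (∑ k, f (v k)) - n * μ := by
    intro v
    rw [Finset.sum_sub_distrib]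
    simp [mul_comm]
  have hprod_nonneg : ∀ v : Fin n → Ω, 0 ≤ ∏ k, P (v k) := fun v =>
    Finset.prod_nonneg (fun k _ => hP0 (v k))
  calc ((n : ℝ) * ε)^2 * ∑ v ∈ B, ∏ k, P (v k)
      = ∑ v ∈ B, (∏ k, P (v k)) * ((n : ℝ) * ε)^2 := by
        rw [Finset.mul_sum]
        congr 1; ext v; ring
    _ ≤ ∑ v ∈ B, (∏ k, P (v k)) * ((∑ k, f (v k)) - n * μ)^2 := by
        apply Finset.sum_le_sum
        intro v hv
        rcases hB v hv with h0 | h1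
        · rw [h0]; simp
        · apply mul_le_mul_of_nonneg_left _ (hprod_nonneg v)
          calc ((n : ℝ) * ε)^2 = |(n : ℝ) * ε|^2 := by
                rw [abs_of_nonneg (by positivity)]
            _ ≤ |(∑ k, f (v k)) - n * μ|^2 := by
                apply pow_le_pow_left₀ (abs_nonneg _) _ 2
                rwa [abs_of_nonneg (by positivity)]
            _ = ((∑ k, f (v k)) - n * μ)^2 := sq_abs _
    _ ≤ ∑ v : Fin n → Ω, (∏ k, P (v k)) * ((∑ k, f (v k)) - n * μ)^2 := by
        apply Finset.sum_le_sum_of_subset_of_nonneg (Finset.subset_univ B)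
        intro v _ _
        exact mul_nonneg (hprod_nonneg v) (sq_nonneg _)
    _ = n * ∑ x, P x * (f x - μ)^2 := by
        rw [← hvar]
        congr 1; ext v
        rw [hSn v]

section core
variable {Ω : Type*} [Fintype Ω] (P Q : Ω → ℝ)

/-- relation between product probabilities via the log-likelihood ratio -/
lemma QP_rel (hP0 : ∀ x, 0 ≤ P x) (hQ0 : ∀ x, 0 ≤ Q x)
    (habs : ∀ x, P x ≠ 0 → Q x ≠ 0) (n : ℕ) (v : Fin n → Ω)
    (hv : ∏ k, P (v k) ≠ 0) :
    ∏ k, Q (v k) = (∏ k, P (v k)) *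
      (2 : ℝ) ^ (-(∑ k, Real.logb 2 (P (v k) / Q (v k)))) := by
  have hPk : ∀ k, P (v k) ≠ 0 := fun k => by
    intro h
    exact hv (Finset.prod_eq_zero (Finset.mem_univ k) h)
  have hPk' : ∀ k, 0 < P (v k) := fun k => (hP0 (v k)).lt_of_ne (Ne.symm (hPk k))
  have hQk' : ∀ k, 0 < Q (v k) := fun k =>
    (hQ0 (v k)).lt_of_ne (Ne.symm (habs _ (hPk k)))
  have step : ∀ k, P (v k) * (2:ℝ) ^ (-(Real.logb 2 (P (v k) / Q (v k)))) = Q (v k) := by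
    intro k
    rw [Real.rpow_neg (by norm_num : (0:ℝ) ≤ 2),
      Real.rpow_logb (by norm_num) (by norm_num) (div_pos (hPk' k) (hQk' k))]
    rw [inv_div, mul_div_cancel₀ _ (hPk k)]
  calc ∏ k, Q (v k)
      = ∏ k, (P (v k) * (2:ℝ) ^ (-(Real.logb 2 (P (v k) / Q (v k))))) := by
        simp_rw [step]
    _ = (∏ k, P (v k)) * ∏ k, (2:ℝ) ^ (-(Real.logb 2 (P (v k) / Q (v k)))) :=
        Finset.prod_mul_distrib
    _ = (∏ k, P (v k)) * (2:ℝ) ^ (∑ k, -(Real.logb 2 (P (v k) / Q (v k)))) := by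
        rw [Real.rpow_sum_of_pos (by norm_num : (0:ℝ) < 2)]
    _ = (∏ k, P (v k)) * (2 : ℝ) ^ (-(∑ k, Real.logb 2 (P (v k) / Q (v k)))) := by
        rw [← Finset.sum_neg_distrib]

lemma D0_lower (hP : IsPmf P) (hQ : IsPmf Q)
    (habs : ∀ x, P x ≠ 0 → Q x ≠ 0) {δ ε : ℝ} (hδ : 0 < δ) (hε : 0 < ε)
    (n : ℕ) (hn : 0 < n)
    (hgood : ∑ x, P x * (Real.logb 2 (P x / Q x) - ∑ y, P y * Real.logb 2 (P y / Q y))^2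
      ≤ (n:ℝ) * ε^2 * δ) :
    (((n:ℝ) * ((∑ x, P x * Real.logb 2 (P x / Q x)) - ε) : ℝ) : EReal)
      ≤ D0smooth (fun v : Fin n → Ω => ∏ k, P (v k)) (fun v => ∏ k, Q (v k)) δ := by
  classical
  set f : Ω → ℝ := fun x => Real.logb 2 (P x / Q x) with hf
  set μ : ℝ := ∑ x, P x * f x with hμ
  set p : (Fin n → Ω) → Prop :=
    fun v => (∏ k, P (v k)) ≠ 0 ∧ (n:ℝ) * (μ - ε) ≤ ∑ k, f (v k) with hp
  set A : Finset (Fin n → Ω) := Finset.univ.filter p with hA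
  set B : Finset (Fin n → Ω) := Finset.univ.filter (fun v => ¬ p v) with hB
  set Φ : (Fin n → Ω) → ℝ := fun v => if v ∈ A then (1:ℝ) else 0 with hΦ
  have hΦ01 : ∀ v, 0 ≤ Φ v ∧ Φ v ≤ 1 := by
    intro v; by_cases h : v ∈ A <;> simp [hΦ, h]
  have hΦP : ∑ v, Φ v * (∏ k, P (v k)) = ∑ v ∈ A, ∏ k, P (v k) := by
    simp only [hΦ, ite_mul, one_mul, zero_mul]
    rw [Finset.sum_ite_mem, Finset.univ_inter]
  have hΦQ : ∑ v, Φ v * (∏ k, Q (v k)) = ∑ v ∈ A, ∏ k, Q (v k) := by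
    simp only [hΦ, ite_mul, one_mul, zero_mul]
    rw [Finset.sum_ite_mem, Finset.univ_inter]
  -- Chebyshev: bad mass ≤ δ
  have hBmem : ∀ v ∈ B, (∏ k, P (v k)) = 0 ∨
      (n : ℝ) * ε ≤ |(∑ k, f (v k)) - n * μ| := by
    intro v hv
    rw [hB, Finset.mem_filter] at hv
    replace hv := hv.2
    rw [hp] at hv
    simp only [] at hv
    by_cases h0 : (∏ k, P (v k)) = 0
    · exact Or.inl h0
    · right
      have hS : ¬ ((n:ℝ) * (μ - ε) ≤ ∑ k, f (v k)) := fun hq => hv ⟨h0, hq⟩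
      push_neg at hS
      have hring : (n:ℝ) * (μ - ε) = (n:ℝ) * μ - (n:ℝ) * ε := by ring
      calc (n:ℝ) * ε ≤ -((∑ k, f (v k)) - (n:ℝ) * μ) := by linarith
        _ ≤ |(∑ k, f (v k)) - (n:ℝ) * μ| := neg_le_abs _
  have cheb := chebyshev hP.1 hP.2 n f hε B hBmem
  have hnpos : (0:ℝ) < n := Nat.cast_pos.mpr hn
  have hBδ : ∑ v ∈ B, ∏ k, P (v k) ≤ δ := by
    have hpos : (0:ℝ) < ((n:ℝ) * ε)^2 := by positivity
    have h2 : ((n:ℝ) * ε)^2 * (∑ v ∈ B, ∏ k, P (v k)) ≤ ((n:ℝ) * ε)^2 * δ := by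
      calc ((n:ℝ) * ε)^2 * (∑ v ∈ B, ∏ k, P (v k))
          ≤ (n:ℝ) * ∑ x, P x * (f x - μ)^2 := cheb
        _ ≤ (n:ℝ) * ((n:ℝ) * ε^2 * δ) := by
            apply mul_le_mul_of_nonneg_left _ (le_of_lt hnpos)
            exact hgood
        _ = ((n:ℝ) * ε)^2 * δ := by ring
    exact le_of_mul_le_mul_left h2 hpos
  have hfeas : 1 - δ ≤ ∑ v, Φ v * (∏ k, P (v k)) := by
    rw [hΦP]
    have htot := Finset.sum_filter_add_sum_filter_not Finset.univ p
      (fun v : Fin n → Ω => ∏ k, P (v k))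
    rw [mass_one hP.2 n] at htot
    have : ∑ v ∈ A, ∏ k, P (v k) = 1 - ∑ v ∈ B, ∏ k, P (v k) := by
      rw [hA, hB]; linarith
    rw [this]; linarith
  -- membership in the sup set
  have hmem : negLog2 (∑ v, Φ v * (∏ k, Q (v k))) ∈
      { r : EReal | ∃ Φ' : (Fin n → Ω) → ℝ, (∀ x, 0 ≤ Φ' x ∧ Φ' x ≤ 1) ∧
        1 - δ ≤ ∑ x, Φ' x * (∏ k, P (x k)) ∧
        r = negLog2 (∑ x, Φ' x * (∏ k, Q (x k))) } :=
    ⟨Φ, hΦ01, hfeas, rfl⟩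
  have hle := le_sSup hmem
  refine le_trans ?_ hle
  -- bound the Q-mass of A
  set t : ℝ := ∑ v, Φ v * (∏ k, Q (v k)) with ht
  have htA : t = ∑ v ∈ A, ∏ k, Q (v k) := hΦQ
  have ht_nonneg : ∀ v ∈ A, (0:ℝ) ≤ ∏ k, Q (v k) := fun v _ =>
    Finset.prod_nonneg (fun k _ => hQ.1 (v k))
  have ht_le : t ≤ (2:ℝ) ^ (-((n:ℝ) * (μ - ε))) := by
    rw [htA]
    calc ∑ v ∈ A, ∏ k, Q (v k)
        ≤ ∑ v ∈ A, (∏ k, P (v k)) * (2:ℝ) ^ (-((n:ℝ) * (μ - ε))) := by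
          apply Finset.sum_le_sum
          intro v hv
          rw [hA, Finset.mem_filter, hp] at hv
          obtain ⟨-, hv0, hvS⟩ := hv
          rw [QP_rel P Q hP.1 hQ.1 habs n v hv0]
          apply mul_le_mul_of_nonneg_left _ (Finset.prod_nonneg (fun k _ => hP.1 (v k)))
          apply Real.rpow_le_rpow_of_exponent_le one_le_two
          linarith
      _ = (∑ v ∈ A, ∏ k, P (v k)) * (2:ℝ) ^ (-((n:ℝ) * (μ - ε))) :=
          (Finset.sum_mul _ _ _).symm
      _ ≤ 1 * (2:ℝ) ^ (-((n:ℝ) * (μ - ε))) := by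
          apply mul_le_mul_of_nonneg_right _ (le_of_lt (Real.rpow_pos_of_pos two_pos _))
          rw [← mass_one hP.2 n]
          apply Finset.sum_le_sum_of_subset_of_nonneg (Finset.subset_univ A)
          intro v _ _
          exact Finset.prod_nonneg (fun k _ => hP.1 (v k))
      _ = (2:ℝ) ^ (-((n:ℝ) * (μ - ε))) := one_mul _
  by_cases ht0 : t = 0
  · rw [negLog2, if_pos ht0]
    exact le_top
  · have htpos : 0 < t := by
      rcases (Finset.sum_nonneg (fun v _ =>
        mul_nonneg (hΦ01 v).1 (Finset.prod_nonneg (fun k _ => hQ.1 (v k))))).lt_or_eq with h | h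
      · exact h
      · exact absurd h.symm ht0
    rw [negLog2, if_neg ht0, EReal.coe_le_coe_iff]
    have hlog : Real.logb 2 t ≤ -((n:ℝ) * (μ - ε)) := by
      have := (Real.logb_le_logb one_lt_two htpos (Real.rpow_pos_of_pos two_pos _)).2 ht_le
      rwa [Real.logb_rpow (by norm_num) (by norm_num)] at this
    linarith

lemma D0_upper (hP : IsPmf P) (hQ : IsPmf Q)
    (habs : ∀ x, P x ≠ 0 → Q x ≠ 0) {δ ε : ℝ} (hδ0 : 0 < δ) (hδ1 : δ < 1) (hε : 0 < ε)
    (n : ℕ) (hn : 0 < n)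
    (hgood : ∑ x, P x * (Real.logb 2 (P x / Q x) - ∑ y, P y * Real.logb 2 (P y / Q y))^2
      ≤ (n:ℝ) * ε^2 * ((1 - δ)/2)) :
    D0smooth (fun v : Fin n → Ω => ∏ k, P (v k)) (fun v => ∏ k, Q (v k)) δ
      ≤ (((n:ℝ) * ((∑ x, P x * Real.logb 2 (P x / Q x)) + ε)
          - Real.logb 2 ((1 - δ)/2) : ℝ) : EReal) := by
  classical
  set f : Ω → ℝ := fun x => Real.logb 2 (P x / Q x) with hf
  set μ : ℝ := ∑ x, P x * f x with hμ
  set p : (Fin n → Ω) → Prop :=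
    fun v => (∏ k, P (v k)) ≠ 0 ∧ (∑ k, f (v k)) ≤ (n:ℝ) * (μ + ε) with hp
  set C : Finset (Fin n → Ω) := Finset.univ.filter p with hC
  set B : Finset (Fin n → Ω) := Finset.univ.filter (fun v => ¬ p v) with hB
  have hnpos : (0:ℝ) < n := Nat.cast_pos.mpr hn
  have hc : (0:ℝ) < (1 - δ)/2 := by linarith
  -- Chebyshev: bad mass ≤ (1-δ)/2
  have hBmem : ∀ v ∈ B, (∏ k, P (v k)) = 0 ∨
      (n : ℝ) * ε ≤ |(∑ k, f (v k)) - n * μ| := by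
    intro v hv
    rw [hB, Finset.mem_filter] at hv
    replace hv := hv.2
    rw [hp] at hv
    simp only [] at hv
    by_cases h0 : (∏ k, P (v k)) = 0
    · exact Or.inl h0
    · right
      have hS : ¬ ((∑ k, f (v k)) ≤ (n:ℝ) * (μ + ε)) := fun hq => hv ⟨h0, hq⟩
      push_neg at hS
      have hring : (n:ℝ) * (μ + ε) = (n:ℝ) * μ + (n:ℝ) * ε := by ring
      calc (n:ℝ) * ε ≤ (∑ k, f (v k)) - (n:ℝ) * μ := by linarith
        _ ≤ |(∑ k, f (v k)) - (n:ℝ) * μ| := le_abs_self _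
  have cheb := chebyshev hP.1 hP.2 n f hε B hBmem
  have hBmass : ∑ v ∈ B, ∏ k, P (v k) ≤ (1 - δ)/2 := by
    have hpos : (0:ℝ) < ((n:ℝ) * ε)^2 := by positivity
    have h2 : ((n:ℝ) * ε)^2 * (∑ v ∈ B, ∏ k, P (v k)) ≤ ((n:ℝ) * ε)^2 * ((1 - δ)/2) := by
      calc ((n:ℝ) * ε)^2 * (∑ v ∈ B, ∏ k, P (v k))
          ≤ (n:ℝ) * ∑ x, P x * (f x - μ)^2 := cheb
        _ ≤ (n:ℝ) * ((n:ℝ) * ε^2 * ((1 - δ)/2)) :=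
            mul_le_mul_of_nonneg_left hgood (le_of_lt hnpos)
        _ = ((n:ℝ) * ε)^2 * ((1 - δ)/2) := by ring
    exact le_of_mul_le_mul_left h2 hpos
  apply sSup_le
  rintro r ⟨Φ, hΦ01, hfeas, rfl⟩
  have hPn_nonneg : ∀ v : Fin n → Ω, (0:ℝ) ≤ ∏ k, P (v k) := fun v =>
    Finset.prod_nonneg (fun k _ => hP.1 (v k))
  have hQn_nonneg : ∀ v : Fin n → Ω, (0:ℝ) ≤ ∏ k, Q (v k) := fun v =>
    Finset.prod_nonneg (fun k _ => hQ.1 (v k))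
  -- the Φ-mass of P on C is at least (1-δ)/2
  have hsplit := Finset.sum_filter_add_sum_filter_not Finset.univ p
    (fun v : Fin n → Ω => Φ v * ∏ k, P (v k))
  have hBpart : ∑ v ∈ B, Φ v * ∏ k, P (v k) ≤ (1 - δ)/2 := by
    calc ∑ v ∈ B, Φ v * ∏ k, P (v k) ≤ ∑ v ∈ B, ∏ k, P (v k) := by
          apply Finset.sum_le_sum
          intro v _
          calc Φ v * ∏ k, P (v k) ≤ 1 * ∏ k, P (v k) :=
                mul_le_mul_of_nonneg_right (hΦ01 v).2 (hPn_nonneg v)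
            _ = ∏ k, P (v k) := one_mul _
      _ ≤ (1 - δ)/2 := hBmass
  have hCP : (1 - δ)/2 ≤ ∑ v ∈ C, Φ v * ∏ k, P (v k) := by
    have : ∑ v ∈ C, Φ v * ∏ k, P (v k)
        = (∑ v, Φ v * ∏ k, P (v k)) - ∑ v ∈ B, Φ v * ∏ k, P (v k) := by
      rw [hC, hB]; linarith [hsplit]
    rw [this]
    linarith
  -- lower bound on the Q-mass
  set t : ℝ := ∑ v, Φ v * (∏ k, Q (v k)) with ht
  have ht_ge : (2:ℝ) ^ (-((n:ℝ) * (μ + ε))) * ((1 - δ)/2) ≤ t := by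
    calc (2:ℝ) ^ (-((n:ℝ) * (μ + ε))) * ((1 - δ)/2)
        ≤ (2:ℝ) ^ (-((n:ℝ) * (μ + ε))) * ∑ v ∈ C, Φ v * ∏ k, P (v k) :=
          mul_le_mul_of_nonneg_left hCP (le_of_lt (Real.rpow_pos_of_pos two_pos _))
      _ = ∑ v ∈ C, Φ v * ((∏ k, P (v k)) * (2:ℝ) ^ (-((n:ℝ) * (μ + ε)))) := by
          rw [Finset.mul_sum]
          congr 1; ext v; ring
      _ ≤ ∑ v ∈ C, Φ v * (∏ k, Q (v k)) := by
          apply Finset.sum_le_sum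
          intro v hv
          rw [hC, Finset.mem_filter, hp] at hv
          obtain ⟨-, hv0, hvS⟩ := hv
          apply mul_le_mul_of_nonneg_left _ (hΦ01 v).1
          rw [QP_rel P Q hP.1 hQ.1 habs n v hv0]
          apply mul_le_mul_of_nonneg_left _ (hPn_nonneg v)
          apply Real.rpow_le_rpow_of_exponent_le one_le_two
          linarith
      _ ≤ ∑ v, Φ v * (∏ k, Q (v k)) := by
          apply Finset.sum_le_sum_of_subset_of_nonneg (Finset.subset_univ C)
          intro v _ _
          exact mul_nonneg (hΦ01 v).1 (hQn_nonneg v)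
  have htpos : 0 < t :=
    lt_of_lt_of_le (mul_pos (Real.rpow_pos_of_pos two_pos _) hc) ht_ge
  rw [negLog2, if_neg (ne_of_gt htpos), EReal.coe_le_coe_iff]
  have hlog : Real.logb 2 ((2:ℝ) ^ (-((n:ℝ) * (μ + ε))) * ((1 - δ)/2)) ≤ Real.logb 2 t :=
    (Real.logb_le_logb one_lt_two (mul_pos (Real.rpow_pos_of_pos two_pos _) hc) htpos).2 ht_ge
  rw [Real.logb_mul (ne_of_gt (Real.rpow_pos_of_pos two_pos _)) (ne_of_gt hc),
    Real.logb_rpow (by norm_num) (by norm_num)] at hlog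
  linarith

lemma ereal_eq_of_bounds (L : EReal) (m : ℝ)
    (h1 : ∀ ε : ℝ, 0 < ε → ((m - ε : ℝ):EReal) ≤ L)
    (h2 : ∀ ε : ℝ, 0 < ε → L ≤ ((m + ε : ℝ):EReal)) : L = ((m:ℝ):EReal) := by
  apply le_antisymm
  · apply le_of_forall_gt_imp_ge_of_dense
    intro c hc
    induction c using EReal.rec with
    | bot => exact absurd hc (by simp)
    | coe r =>
        have hr : m < r := EReal.coe_lt_coe_iff.1 hc
        calc L ≤ ((m + (r - m):ℝ):EReal) := h2 _ (by linarith)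
          _ = ((r:ℝ):EReal) := by norm_num
    | top => exact le_top
  · apply le_of_forall_lt_imp_le_of_dense
    intro c hc
    induction c using EReal.rec with
    | bot => exact bot_le
    | coe r =>
        have hr : r < m := EReal.coe_lt_coe_iff.1 hc
        calc ((r:ℝ):EReal) = ((m - (m - r):ℝ):EReal) := by norm_num
          _ ≤ L := h1 _ (by linarith)
    | top => exact absurd hc (by simp)

open Filter in
lemma liminf_eq_mu (hP : IsPmf P) (hQ : IsPmf Q)
    (habs : ∀ x, P x ≠ 0 → Q x ≠ 0) {δ : ℝ} (hδ0 : 0 < δ) (hδ1 : δ < 1) :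
    liminf (fun n : ℕ => ((1 / (n:ℝ) : ℝ) : EReal) *
        D0smooth (fun v : Fin n → Ω => ∏ k, P (v k))
          (fun v : Fin n → Ω => ∏ k, Q (v k)) δ) atTop
      = ((∑ x, P x * Real.logb 2 (P x / Q x) : ℝ) : EReal) := by
  classical
  set μ : ℝ := ∑ x, P x * Real.logb 2 (P x / Q x) with hμ
  set σ2 : ℝ := ∑ x, P x * (Real.logb 2 (P x / Q x)
    - ∑ y, P y * Real.logb 2 (P y / Q y))^2 with hσ2
  have hσ2_nonneg : 0 ≤ σ2 := Finset.sum_nonneg (fun x _ =>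
    mul_nonneg (hP.1 x) (sq_nonneg _))
  set a : ℕ → EReal := fun n => ((1 / (n:ℝ) : ℝ) : EReal) *
    D0smooth (fun v : Fin n → Ω => ∏ k, P (v k))
      (fun v : Fin n → Ω => ∏ k, Q (v k)) δ with ha
  apply ereal_eq_of_bounds
  · -- lower bound
    intro ε hε
    obtain ⟨N, hN⟩ := exists_nat_ge (σ2 / (ε^2 * δ))
    have hev : ∀ᶠ n : ℕ in atTop, ((μ - ε : ℝ):EReal) ≤ a n := by
      filter_upwards [eventually_ge_atTop (max 1 N)] with n hn
      have hn1 : 1 ≤ n := le_trans (le_max_left _ _) hn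
      have hnN : (N:ℝ) ≤ n := Nat.cast_le.2 (le_trans (le_max_right _ _) hn)
      have hnpos : (0:ℝ) < n := by positivity
      have hgood : σ2 ≤ (n:ℝ) * ε^2 * δ := by
        have h1 : σ2 / (ε^2 * δ) ≤ (n:ℝ) := le_trans hN hnN
        have h2 : (0:ℝ) < ε^2 * δ := by positivity
        rw [div_le_iff₀ h2] at h1
        calc σ2 ≤ (n:ℝ) * (ε^2 * δ) := h1
          _ = (n:ℝ) * ε^2 * δ := by ring
      have hD := D0_lower P Q hP hQ habs hδ0 hε n hn1 hgood
      calc ((μ - ε : ℝ):EReal)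
          = (((1/(n:ℝ)) * ((n:ℝ) * (μ - ε)) : ℝ) : EReal) := by
            congr 1
            field_simp
        _ = ((1/(n:ℝ) : ℝ) : EReal) * (((n:ℝ) * (μ - ε) : ℝ) : EReal) :=
            EReal.coe_mul _ _
        _ ≤ a n := by
            apply mul_le_mul_of_nonneg_left hD
            exact EReal.coe_nonneg.2 (by positivity)
    calc ((μ - ε : ℝ):EReal) = liminf (fun _ : ℕ => ((μ - ε : ℝ):EReal)) atTop :=
          (liminf_const _).symm
      _ ≤ liminf a atTop := liminf_le_liminf hev
  · -- upper bound
    intro ε hε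
    have hε2 : (0:ℝ) < ε/2 := by linarith
    set c : ℝ := - Real.logb 2 ((1 - δ)/2) with hc
    obtain ⟨N1, hN1⟩ := exists_nat_ge (σ2 / ((ε/2)^2 * ((1 - δ)/2)))
    obtain ⟨N2, hN2⟩ := exists_nat_ge (c / (ε/2))
    have hev : ∀ᶠ n : ℕ in atTop, a n ≤ ((μ + ε : ℝ):EReal) := by
      filter_upwards [eventually_ge_atTop (max 1 (max N1 N2))] with n hn
      have hn1 : 1 ≤ n := le_trans (le_max_left _ _) hn
      have hnN1 : (N1:ℝ) ≤ n := Nat.cast_le.2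
        (le_trans (le_trans (le_max_left _ _) (le_max_right _ _)) hn)
      have hnN2 : (N2:ℝ) ≤ n := Nat.cast_le.2
        (le_trans (le_trans (le_max_right _ _) (le_max_right _ _)) hn)
      have hnpos : (0:ℝ) < n := by positivity
      have h1δ : (0:ℝ) < (1 - δ)/2 := by linarith
      have hgood : σ2 ≤ (n:ℝ) * (ε/2)^2 * ((1 - δ)/2) := by
        have h1 : σ2 / ((ε/2)^2 * ((1 - δ)/2)) ≤ (n:ℝ) := le_trans hN1 hnN1
        have h2 : (0:ℝ) < (ε/2)^2 * ((1 - δ)/2) := by positivity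
        rw [div_le_iff₀ h2] at h1
        calc σ2 ≤ (n:ℝ) * ((ε/2)^2 * ((1 - δ)/2)) := h1
          _ = (n:ℝ) * (ε/2)^2 * ((1 - δ)/2) := by ring
      have hcn : c ≤ (n:ℝ) * (ε/2) := by
        have h1 : c / (ε/2) ≤ (n:ℝ) := le_trans hN2 hnN2
        rw [div_le_iff₀ hε2] at h1
        linarith
      have hD := D0_upper P Q hP hQ habs hδ0 hδ1 hε2 n hn1 hgood
      calc a n ≤ ((1/(n:ℝ) : ℝ) : EReal) *
            (((n:ℝ) * (μ + ε/2) - Real.logb 2 ((1 - δ)/2) : ℝ) : EReal) := by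
            apply mul_le_mul_of_nonneg_left hD
            exact EReal.coe_nonneg.2 (by positivity)
        _ = (((1/(n:ℝ)) * ((n:ℝ) * (μ + ε/2) - Real.logb 2 ((1 - δ)/2)) : ℝ) : EReal) :=
            (EReal.coe_mul _ _).symm
        _ ≤ ((μ + ε : ℝ):EReal) := by
            apply EReal.coe_le_coe_iff.2
            have key : (1/(n:ℝ)) * ((n:ℝ) * (μ + ε/2) - Real.logb 2 ((1 - δ)/2))
                = μ + ε/2 + c/(n:ℝ) := by
              rw [hc]
              field_simp
              ring
            rw [key]
            have : c/(n:ℝ) ≤ ε/2 := by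
              rw [div_le_iff₀ hnpos]
              calc c ≤ (n:ℝ) * (ε/2) := hcn
                _ = ε/2 * (n:ℝ) := by ring
            linarith
    calc liminf a atTop ≤ liminf (fun _ : ℕ => ((μ + ε : ℝ):EReal)) atTop :=
          liminf_le_liminf hev
      _ = ((μ + ε : ℝ):EReal) := liminf_const _

end core

open Filter

/-- For i.i.d. products, `lim_{δ↓0} liminf_n (1/n)·D₀^δ(P^{×n}‖Q^{×n}) = D(P‖Q)`. -/
theorem D0smooth_iid_limit {Ω : Type*} [Fintype Ω]
    (P Q : Ω → ℝ) (hP : IsPmf P) (hQ : IsPmf Q)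
    (habs : ∀ x, P x ≠ 0 → Q x ≠ 0) :
    Tendsto (fun δ : ℝ =>
        liminf (fun n : ℕ => ((1 / (n:ℝ) : ℝ) : EReal) *
          D0smooth (fun v : Fin n → Ω => ∏ k, P (v k))
            (fun v : Fin n → Ω => ∏ k, Q (v k)) δ) atTop)
      (nhdsWithin 0 (Set.Ioi 0))
      (nhds ((∑ x, P x * Real.logb 2 (P x / Q x) : ℝ) : EReal)) := by
  apply Tendsto.congr'
    (f₁ := fun _ : ℝ => ((∑ x, P x * Real.logb 2 (P x / Q x) : ℝ) : EReal))
  · have hIoo : Set.Ioo (0:ℝ) 1 ∈ nhdsWithin 0 (Set.Ioi 0) :=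
      Ioo_mem_nhdsGT_of_mem (by constructor <;> norm_num)
    filter_upwards [hIoo] with δ hδ
    exact (liminf_eq_mu P Q hP hQ habs hδ.1 hδ.2).symm
  · exact tendsto_const_nhds
end

section
/- The smooth 0-divergence dominates a Chernoff-type tail bound: for probability mass functions P ≪ Q on a finite set Ω, any a ∈ ℝ, and δ ≥ P({x : (log₂(P(x)/Q(x))) < a}), we have D₀^δ(P‖Q) ≥ a + log₂ P(A) where A = {x : log₂(P(x)/Q(x)) ≥ a}; in particular if P(A) ≥ 1 - δ then D₀^δ(P‖Q) ≥ a + log₂(1-δ). -/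
open scoped BigOperators Classical

/-- `log₂ s` with convention `log₂ 0 = -∞`, valued in the extended reals. -/
noncomputable def log2E (s : ℝ) : EReal :=
  if s = 0 then ⊥ else ((Real.logb 2 s : ℝ) : EReal)

/-- Chernoff-type bound: with `A = {x : log₂(P x / Q x) ≥ a}` and
`δ ≥ P({x : log₂(P x / Q x) < a})`, we have `D₀^δ(P‖Q) ≥ a + log₂ P(A)`;
in particular `D₀^δ(P‖Q) ≥ a + log₂(1-δ)`. -/
theorem D0smooth_chernoff {Ω : Type*} [Fintype Ω]
    (P Q : Ω → ℝ) (hP : IsPmf P) (hQ : IsPmf Q)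
    (habs : ∀ x, P x ≠ 0 → Q x ≠ 0)
    (a δ : ℝ)
    (hδ : ∑ x ∈ Finset.univ.filter (fun x => Real.logb 2 (P x / Q x) < a), P x ≤ δ) :
    (a : EReal) + log2E (∑ x ∈ Finset.univ.filter
        (fun x => a ≤ Real.logb 2 (P x / Q x)), P x) ≤ D0smooth P Q δ ∧
    ((a + Real.logb 2 (1 - δ) : ℝ) : EReal) ≤ D0smooth P Q δ := by
  classical
  obtain ⟨hP0, hP1⟩ := hP
  obtain ⟨hQ0, _⟩ := hQ
  have hδ0 : 0 ≤ δ :=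
    le_trans (Finset.sum_nonneg fun x _ => hP0 x) hδ
  by_cases hδ1 : 1 ≤ δ
  · -- trivial case: Φ = 0 works, D0smooth = ⊤
    have htop : (⊤ : EReal) ≤ D0smooth P Q δ := by
      apply le_sSup
      refine ⟨fun _ => 0, fun x => ⟨le_refl 0, zero_le_one⟩, ?_, ?_⟩
      · simp; linarith
      · simp [negLog2]
    exact ⟨le_trans le_top htop, le_trans le_top htop⟩
  · push_neg at hδ1
    set A := Finset.univ.filter (fun x => a ≤ Real.logb 2 (P x / Q x)) with hA
    set Φ : Ω → ℝ := fun x => if 0 < P x ∧ a ≤ Real.logb 2 (P x / Q x) then 1 else 0 with hΦ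
    -- sum over A of P
    have hPAle : 1 - δ ≤ ∑ x ∈ A, P x := by
      have hsplit := Finset.sum_filter_add_sum_filter_not Finset.univ
        (fun x => a ≤ Real.logb 2 (P x / Q x)) P
      have hcompl : (Finset.univ.filter (fun x => ¬ a ≤ Real.logb 2 (P x / Q x)))
          = Finset.univ.filter (fun x => Real.logb 2 (P x / Q x) < a) := by
        apply Finset.filter_congr
        intro x _
        simp [not_le]
      rw [hcompl, hP1] at hsplit
      linarith
    have hΦP : ∑ x, Φ x * P x = ∑ x ∈ A, P x := by
      rw [hA, Finset.sum_filter]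
      apply Finset.sum_congr rfl
      intro x _
      rcases lt_or_eq_of_le (hP0 x) with hp | hp
      · by_cases hc : a ≤ Real.logb 2 (P x / Q x) <;> simp [hΦ, hp, hc]
      · simp [hΦ, ← hp]
    have hΦ01 : ∀ x, 0 ≤ Φ x ∧ Φ x ≤ 1 := by
      intro x
      by_cases hc : 0 < P x ∧ a ≤ Real.logb 2 (P x / Q x) <;> norm_num [hΦ, hc]
    have hpow : (0:ℝ) < (2:ℝ) ^ (-a) := Real.rpow_pos_of_pos (by norm_num) _
    have hΦQ : ∑ x, Φ x * Q x ≤ (2:ℝ) ^ (-a) := by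
      have hle : ∀ x, Φ x * Q x ≤ (2:ℝ) ^ (-a) * P x := by
        intro x
        by_cases hc : 0 < P x ∧ a ≤ Real.logb 2 (P x / Q x)
        · obtain ⟨hp, hl⟩ := hc
          have hq : 0 < Q x := lt_of_le_of_ne (hQ0 x) (Ne.symm (habs x (ne_of_gt hp)))
          have hdiv : (2:ℝ) ^ a ≤ P x / Q x :=
            (Real.le_logb_iff_rpow_le (by norm_num) (div_pos hp hq)).mp hl
          have hpa : (0:ℝ) < (2:ℝ) ^ a := Real.rpow_pos_of_pos (by norm_num) _
          have h1 : (2:ℝ) ^ a * Q x ≤ P x := (le_div_iff₀ hq).mp hdiv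
          have h2 : Φ x * Q x = Q x := by simp [hΦ, hp, hl]
          have h3 : ((2:ℝ) ^ a)⁻¹ * ((2:ℝ) ^ a * Q x) ≤ ((2:ℝ) ^ a)⁻¹ * P x :=
            mul_le_mul_of_nonneg_left h1 (inv_nonneg.mpr hpa.le)
          rw [← mul_assoc, inv_mul_cancel₀ (ne_of_gt hpa), one_mul] at h3
          rw [h2, Real.rpow_neg (by norm_num : (0:ℝ) ≤ 2)]
          exact h3
        · have : Φ x = 0 := by simp [hΦ, hc]
          rw [this, zero_mul]
          exact mul_nonneg hpow.le (hP0 x)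
      calc ∑ x, Φ x * Q x ≤ ∑ x, (2:ℝ) ^ (-a) * P x := Finset.sum_le_sum fun x _ => hle x
        _ = (2:ℝ) ^ (-a) * ∑ x, P x := by rw [Finset.mul_sum]
        _ = (2:ℝ) ^ (-a) := by rw [hP1, mul_one]
    -- the key lower bound
    have hmem : negLog2 (∑ x, Φ x * Q x) ∈ { r : EReal | ∃ Φ : Ω → ℝ,
        (∀ x, 0 ≤ Φ x ∧ Φ x ≤ 1) ∧ 1 - δ ≤ ∑ x, Φ x * P x ∧
        r = negLog2 (∑ x, Φ x * Q x) } := by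
      refine ⟨Φ, hΦ01, by rw [hΦP]; exact hPAle, rfl⟩
    have hD : (a : EReal) ≤ negLog2 (∑ x, Φ x * Q x) := by
      unfold negLog2
      split_ifs with hs
      · exact le_top
      · have hspos : 0 < ∑ x, Φ x * Q x := by
          rcases lt_or_eq_of_le (Finset.sum_nonneg fun x _ => mul_nonneg
            (hΦ01 x).1 (hQ0 x)) with h | h
          · exact h
          · exact absurd h.symm hs
        have : Real.logb 2 (∑ x, Φ x * Q x) ≤ -a := by
          calc Real.logb 2 (∑ x, Φ x * Q x) ≤ Real.logb 2 ((2:ℝ) ^ (-a)) :=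
                Real.logb_le_logb_of_le (by norm_num) hspos hΦQ
            _ = -a := Real.logb_rpow (by norm_num) (by norm_num)
        exact_mod_cast (by linarith : a ≤ -Real.logb 2 (∑ x, Φ x * Q x))
    have hle : (a : EReal) ≤ D0smooth P Q δ := le_trans hD (le_sSup hmem)
    constructor
    · have hlog : log2E (∑ x ∈ A, P x) ≤ 0 := by
        unfold log2E
        split_ifs with hs
        · exact bot_le
        · have hspos : 0 < ∑ x ∈ A, P x :=
            lt_of_le_of_ne (Finset.sum_nonneg fun x _ => hP0 x) (Ne.symm hs)
          have hs1 : ∑ x ∈ A, P x ≤ 1 := by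
            rw [← hP1]
            exact Finset.sum_le_sum_of_subset_of_nonneg (Finset.filter_subset _ _)
              fun x _ _ => hP0 x
          have := Real.logb_nonpos (by norm_num : (1:ℝ) < 2) (le_of_lt hspos) hs1
          exact_mod_cast this
      calc (a : EReal) + log2E (∑ x ∈ A, P x) ≤ (a : EReal) + 0 := add_le_add_right hlog _
        _ = (a : EReal) := add_zero _
        _ ≤ _ := hle
    · have hlog : Real.logb 2 (1 - δ) ≤ 0 :=
        Real.logb_nonpos (by norm_num) (by linarith) (by linarith)
      refine le_trans ?_ hle
      exact_mod_cast (by linarith : a + Real.logb 2 (1 - δ) ≤ a)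
end

section
/- (Non-smooth converse, δ = 0 case) For any (m,0)-code over a channel P_{Y|X} with finite alphabets (zero average error probability), log₂ m ≤ sup_{P_X} D₀(P_{XY} ‖ P_X × P_Y), where D₀ is Rényi's divergence of order 0. -/
open scoped BigOperators Classical

/-- Zero-error converse: any `(m,0)`-code satisfies
`log₂ m ≤ sup_{P_X} D₀(P_{XY} ‖ P_X × P_Y)`. -/
theorem zero_error_converse {X Y : Type*} [Fintype X] [Fintype Y]
    (W : X → Y → ℝ) (hW : ∀ x, IsPmf (W x))
    (m : ℕ) (hm : 1 ≤ m) (f : Fin m → X) (g : Y → Fin m)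
    (hcode : ∀ i : Fin m,
        ∑ y ∈ Finset.univ.filter (fun y => g y ≠ i), W (f i) y = 0) :
    (Real.logb 2 m : EReal)
      ≤ ⨆ PX : { p : X → ℝ // IsPmf p },
          D0 (fun q : X × Y => PX.1 q.1 * W q.1 q.2)
            (fun q : X × Y => PX.1 q.1 * ∑ x, PX.1 x * W x q.2) := by
  classical
  have hWnn : ∀ x y, 0 ≤ W x y := fun x y => (hW x).1 y
  have hm0 : (0:ℝ) < m := by exact_mod_cast hm
  -- zero-error decoding property
  have hdec : ∀ (i : Fin m) y, 0 < W (f i) y → g y = i := by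
    intro i y hy
    by_contra h
    have hz : W (f i) y = 0 := by
      have hnn : ∀ z ∈ Finset.univ.filter (fun y => g y ≠ i), 0 ≤ W (f i) z :=
        fun z _ => hWnn _ _
      exact (Finset.sum_eq_zero_iff_of_nonneg hnn).mp (hcode i) y (by simp [h])
    exact hy.ne' hz
  have hfinj : Function.Injective f := by
    intro i j hij
    have hex : ∃ y, 0 < W (f i) y := by
      by_contra h
      push_neg at h
      have h0 : ∑ y, W (f i) y = 0 :=
        Finset.sum_eq_zero (fun y _ => le_antisymm (h y) (hWnn _ _))
      rw [(hW (f i)).2] at h0; norm_num at h0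
    obtain ⟨y, hy⟩ := hex
    have h1 := hdec i y hy
    have h2 := hdec j y (by rwa [← hij])
    rw [← h1, ← h2]
  set PX : X → ℝ := fun x => if ∃ i, f i = x then 1/m else 0 with hPXdef
  have hPXnn : ∀ x, 0 ≤ PX x := by
    intro x; simp only [hPXdef]; split <;> positivity
  have hPXpmf : IsPmf PX := by
    refine ⟨hPXnn, ?_⟩
    have h1 : ∑ x, PX x = ∑ x, (if x ∈ Finset.univ.image f then (1/m:ℝ) else 0) := by
      apply Finset.sum_congr rfl
      intro x _
      simp [hPXdef, Finset.mem_image]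
    rw [h1, Finset.sum_ite_mem, Finset.univ_inter, Finset.sum_const,
      Finset.card_image_of_injective _ hfinj]
    simp [hm0.ne']
  set PY : Y → ℝ := fun y => ∑ x, PX x * W x y with hPYdef
  have hPYnn : ∀ y, 0 ≤ PY y := fun y =>
    Finset.sum_nonneg fun x _ => mul_nonneg (hPXnn x) (hWnn x y)
  have hPYsum : ∑ y, PY y = 1 := by
    rw [hPYdef]
    rw [Finset.sum_comm]
    have : ∀ x, ∑ y, PX x * W x y = PX x := by
      intro x; rw [← Finset.mul_sum, (hW x).2, mul_one]
    simp only [this]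
    exact hPXpmf.2
  -- the key bound on the D0 sum
  set S : ℝ := ∑ q ∈ Finset.univ.filter
      (fun q : X × Y => 0 < PX q.1 * W q.1 q.2), PX q.1 * PY q.2 with hSdef
  have hSnn : 0 ≤ S :=
    Finset.sum_nonneg fun q _ => mul_nonneg (hPXnn q.1) (hPYnn q.2)
  have hSle : S ≤ 1/m := by
    have hS' : S = ∑ y, ∑ x, (if 0 < PX x * W x y then PX x * PY y else 0) := by
      rw [hSdef, Finset.sum_filter, Fintype.sum_prod_type, Finset.sum_comm]
    rw [hS']
    have key : ∀ y, ∑ x, (if 0 < PX x * W x y then PX x * PY y else 0)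
        ≤ (1/m) * PY y := by
      intro y
      have step : ∀ x, (if 0 < PX x * W x y then PX x * PY y else 0)
          ≤ (if x = f (g y) then (1/m) * PY y else 0) := by
        intro x
        split_ifs with h1 h2
        · have hx : PX x = 1/m := by
            simp only [hPXdef]; rw [if_pos ⟨g y, h2.symm⟩]
          rw [hx]
        · exfalso
          have hpx : 0 < PX x := by
            rcases lt_or_eq_of_le (hPXnn x) with h | h
            · exact h
            · exfalso; rw [← h] at h1; simp at h1
          have hwx : 0 < W x y := by
            rcases lt_or_eq_of_le (hWnn x y) with h | h
            · exact h
            · exfalso; rw [← h] at h1; simp at h1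
          have hex : ∃ i, f i = x := by
            by_contra hc
            simp only [hPXdef] at hpx
            rw [if_neg hc] at hpx
            exact lt_irrefl 0 hpx
          obtain ⟨i, hi⟩ := hex
          have : g y = i := hdec i y (by rwa [hi])
          exact h2 (by rw [this, hi])
        · exact mul_nonneg (by positivity) (hPYnn y)
        · exact le_rfl
      calc ∑ x, (if 0 < PX x * W x y then PX x * PY y else 0)
          ≤ ∑ x, (if x = f (g y) then (1/m) * PY y else 0) :=
            Finset.sum_le_sum fun x _ => step x
        _ = (1/m) * PY y := by
            rw [Finset.sum_ite_eq' Finset.univ (f (g y)) (fun _ => (1/m) * PY y)]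
            simp
    calc ∑ y, ∑ x, (if 0 < PX x * W x y then PX x * PY y else 0)
        ≤ ∑ y, (1/m) * PY y := Finset.sum_le_sum fun y _ => key y
      _ = 1/m := by rw [← Finset.mul_sum, hPYsum, mul_one]
  -- conclude via le_iSup at PX
  have hle : (Real.logb 2 m : EReal) ≤
      D0 (fun q : X × Y => PX q.1 * W q.1 q.2)
        (fun q : X × Y => PX q.1 * ∑ x, PX x * W x q.2) := by
    have hD : D0 (fun q : X × Y => PX q.1 * W q.1 q.2)
        (fun q : X × Y => PX q.1 * ∑ x, PX x * W x q.2) = negLog2 S := by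
      rfl
    rw [hD]
    unfold negLog2
    split_ifs with h0
    · exact le_top
    · have hSpos : 0 < S := lt_of_le_of_ne hSnn (Ne.symm h0)
      have : Real.logb 2 m ≤ -Real.logb 2 S := by
        have h1 : S ≤ 1/m := hSle
        have h2 : Real.logb 2 S ≤ Real.logb 2 (1/m) :=
          Real.logb_le_logb_of_le one_lt_two hSpos h1
        have h3 : Real.logb 2 (1/m) = -Real.logb 2 m := by
          rw [one_div, Real.logb_inv]
        linarith
      exact_mod_cast this
  exact le_trans hle (le_iSup (fun PX' : { p : X → ℝ // IsPmf p } =>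
    D0 (fun q : X × Y => PX'.1 q.1 * W q.1 q.2)
      (fun q : X × Y => PX'.1 q.1 * ∑ x, PX'.1 x * W x q.2)) ⟨PX, hPXpmf⟩)
end

section
/- (Monotonicity under composition with deterministic maps) Let P, Q be probability mass functions on a finite set Ω and h : Ω → Ω' a function to a finite set Ω'. Then for all δ ≥ 0, D₀^δ(P‖Q) ≥ D₀^δ(h_*P ‖ h_*Q), where h_*P denotes the pushforward distribution. -/
open scoped BigOperators Classical

/-- Monotonicity of `D₀^δ` under deterministic pushforward:
`D₀^δ(h_*P ‖ h_*Q) ≤ D₀^δ(P‖Q)`. -/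
theorem D0smooth_pushforward_le {Ω Ω' : Type*} [Fintype Ω] [Fintype Ω']
    (P Q : Ω → ℝ) (hP : IsPmf P) (hQ : IsPmf Q)
    (h : Ω → Ω') (δ : ℝ) (hδ : 0 ≤ δ) :
    D0smooth (fun ω' => ∑ ω ∈ Finset.univ.filter (fun ω => h ω = ω'), P ω)
        (fun ω' => ∑ ω ∈ Finset.univ.filter (fun ω => h ω = ω'), Q ω) δ
      ≤ D0smooth P Q δ := by
  apply sSup_le_sSup
  rintro r ⟨Φ, hΦ, hsum, hr⟩
  refine ⟨Φ ∘ h, fun x => hΦ (h x), ?_, ?_⟩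
  · calc 1 - δ ≤ ∑ ω', Φ ω' * ∑ ω ∈ Finset.univ.filter (fun ω => h ω = ω'), P ω := hsum
      _ = ∑ x, (Φ ∘ h) x * P x := by
          rw [← Finset.sum_fiberwise Finset.univ h (fun x => (Φ ∘ h) x * P x)]
          refine Finset.sum_congr rfl fun ω' _ => ?_
          rw [Finset.mul_sum]
          exact Finset.sum_congr rfl fun x hx => by
            simp only [Finset.mem_filter] at hx; simp [hx.2]
  · rw [hr]
    congr 1
    rw [← Finset.sum_fiberwise Finset.univ h (fun x => (Φ ∘ h) x * Q x)]
    refine Finset.sum_congr rfl fun ω' _ => ?_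
    rw [Finset.mul_sum]
    exact Finset.sum_congr rfl fun x hx => by
      simp only [Finset.mem_filter] at hx; simp [hx.2]
end

section
/- (Capacity lower bound from achievability) Let a channel be given by kernels P_{Y^n|X^n} from X^n to Y^n for each n, with X, Y finite. If R < lim_{ε↓0} liminf_{n→∞} (1/n) sup_{P_{X^n}} D₀^ε(P_{X^nY^n} ‖ P_{X^n} × P_{Y^n}), then for every sufficiently large n there exist (n, M_n, ε_n)-codes with (1/n) log₂ M_n ≥ R and ε_n → 0; hence the channel capacity C satisfies C ≥ lim_{ε↓0} liminf_{n→∞} (1/n) sup_{P_{X^n}} D₀^ε(P_{X^nY^n} ‖ P_{X^n} × P_{Y^n}). -/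
open scoped BigOperators Classical

open Filter

/-- `sup_{P_X} D₀^ε(P_{XY} ‖ P_X × P_Y)` for a channel `W` from `A` to `B`. -/
noncomputable def supD0 {A B : Type*} [Fintype A] [Fintype B]
    (W : A → B → ℝ) (ε : ℝ) : EReal :=
  ⨆ PX : { p : A → ℝ // IsPmf p },
    D0smooth (fun q : A × B => PX.1 q.1 * W q.1 q.2)
      (fun q : A × B => PX.1 q.1 * ∑ a, PX.1 a * W a q.2) ε

/-- Existence of an `(M,ε)`-code (average error probability at most `ε`)
for the channel `W` from `A` to `B`. -/
def IsCode {A B : Type*} [Fintype A] [Fintype B] (W : A → B → ℝ) (M : ℕ) (ε : ℝ) : Prop :=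
  ∃ (f : Fin M → A) (g : B → Fin M),
    (1 / M : ℝ) * ∑ i : Fin M,
      ∑ y ∈ Finset.univ.filter (fun y => g y ≠ i), W (f i) y ≤ ε

open Finset

lemma prodIte_one {ι : Type*} [Fintype ι] [DecidableEq ι] (i : ι) (u : ι → ℝ) :
    ∏ k, (if k = i then u k else 1) = u i := by
  simp [Finset.prod_ite_eq']

lemma prodIte_two {ι : Type*} [Fintype ι] [DecidableEq ι] {i j : ι} (hij : i ≠ j)
    (u v : ι → ℝ) :
    ∏ k, (if k = i then u k else if k = j then v k else 1) = u i * v j := by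
  rw [← Finset.mul_prod_erase univ _ (mem_univ i), if_pos rfl,
    ← Finset.mul_prod_erase _ _ (Finset.mem_erase.2 ⟨Ne.symm hij, mem_univ j⟩),
    if_neg (Ne.symm hij), if_pos rfl]
  have h1 : ∏ k ∈ (univ.erase i).erase j,
      (if k = i then u k else if k = j then v k else 1) = 1 := by
    refine Finset.prod_eq_one fun k hk => ?_
    rw [Finset.mem_erase, Finset.mem_erase] at hk
    rw [if_neg hk.2.1, if_neg hk.1]
  rw [h1, mul_one]

lemma expAux1 {A : Type*} [Fintype A] {M : ℕ} (P : A → ℝ) (hP : ∑ a, P a = 1)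
    (i : Fin M) (h : A → ℝ) :
    ∑ c : Fin M → A, (∏ k, P (c k)) * h (c i) = ∑ a, P a * h a := by
  calc ∑ c : Fin M → A, (∏ k, P (c k)) * h (c i)
      = ∑ c : Fin M → A, ∏ k, (if k = i then P (c k) * h (c k) else P (c k)) := by
        refine Finset.sum_congr rfl fun c _ => ?_
        have e0 : ∀ k : Fin M, (if k = i then P (c k) * h (c k) else P (c k))
            = P (c k) * (if k = i then h (c k) else 1) := by
          intro k; split_ifs <;> ring
        rw [Finset.prod_congr rfl fun k _ => e0 k, Finset.prod_mul_distrib,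
          prodIte_one i (fun k => h (c k))]
    _ = ∏ k : Fin M, ∑ a, (if k = i then P a * h a else P a) :=
        (Fintype.prod_sum (fun (k : Fin M) (a : A) =>
          if k = i then P a * h a else P a)).symm
    _ = ∏ k : Fin M, (if k = i then ∑ a, P a * h a else 1) := by
        refine Finset.prod_congr rfl fun k _ => ?_
        by_cases hk : k = i
        · simp [hk]
        · simp [hk, hP]
    _ = ∑ a, P a * h a := prodIte_one i _

lemma expAux2 {A : Type*} [Fintype A] {M : ℕ} (P : A → ℝ) (hP : ∑ a, P a = 1)
    {i j : Fin M} (hij : i ≠ j) (h₁ h₂ : A → ℝ) :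
    ∑ c : Fin M → A, (∏ k, P (c k)) * (h₁ (c i) * h₂ (c j))
      = (∑ a, P a * h₁ a) * (∑ a, P a * h₂ a) := by
  calc ∑ c : Fin M → A, (∏ k, P (c k)) * (h₁ (c i) * h₂ (c j))
      = ∑ c : Fin M → A, ∏ k, (if k = i then P (c k) * h₁ (c k)
          else if k = j then P (c k) * h₂ (c k) else P (c k)) := by
        refine Finset.sum_congr rfl fun c _ => ?_
        have e0 : ∀ k : Fin M, (if k = i then P (c k) * h₁ (c k)
            else if k = j then P (c k) * h₂ (c k) else P (c k))
            = P (c k) * (if k = i then h₁ (c k) else if k = j then h₂ (c k) else 1) := by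
          intro k; split_ifs <;> ring
        rw [Finset.prod_congr rfl fun k _ => e0 k, Finset.prod_mul_distrib,
          prodIte_two hij (fun k => h₁ (c k)) (fun k => h₂ (c k))]
    _ = ∏ k : Fin M, ∑ a, (if k = i then P a * h₁ a
          else if k = j then P a * h₂ a else P a) :=
        (Fintype.prod_sum (fun (k : Fin M) (a : A) => if k = i then P a * h₁ a
          else if k = j then P a * h₂ a else P a)).symm
    _ = ∏ k : Fin M, (if k = i then ∑ a, P a * h₁ a
          else if k = j then ∑ a, P a * h₂ a else 1) := by
        refine Finset.prod_congr rfl fun k _ => ?_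
        by_cases hk : k = i
        · simp [hk]
        · by_cases hk' : k = j
          · simp [hk, hk']
          · simp [hk, hk', hP]
    _ = (∑ a, P a * h₁ a) * (∑ a, P a * h₂ a) := prodIte_two hij _ _

lemma exists_le_of_weighted {ι : Type*} [Fintype ι] (w f : ι → ℝ)
    (hw0 : ∀ c, 0 ≤ w c) (hw1 : ∑ c, w c = 1) (t : ℝ)
    (h : ∑ c, w c * f c ≤ t) : ∃ c, f c ≤ t := by
  by_contra hcon
  push_neg at hcon
  obtain ⟨c₀, -, hc₀⟩ := Finset.exists_ne_zero_of_sum_ne_zero (by rw [hw1]; norm_num :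
    ∑ c, w c ≠ 0)
  have hc₀' : 0 < w c₀ := lt_of_le_of_ne (hw0 c₀) (Ne.symm hc₀)
  have hlt : ∑ c, w c * t < ∑ c, w c * f c := by
    refine Finset.sum_lt_sum (fun c _ => ?_) ⟨c₀, Finset.mem_univ c₀, ?_⟩
    · exact mul_le_mul_of_nonneg_left (hcon c).le (hw0 c)
    · exact mul_lt_mul_of_pos_left (hcon c₀) hc₀'
  rw [← Finset.sum_mul, hw1, one_mul] at hlt
  linarith

noncomputable def decode {A B : Type*} (T : A × B → Prop) {M : ℕ} (hM : 1 ≤ M)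
    (c : Fin M → A) (y : B) : Fin M :=
  if h : ∃ i, T (c i, y) then h.choose else ⟨0, hM⟩

lemma decode_spec {A B : Type*} (T : A × B → Prop) {M : ℕ} (hM : 1 ≤ M)
    (c : Fin M → A) (y : B) (i : Fin M) (h : T (c i, y)) :
    T (c (decode T hM c y), y) := by
  have hex : ∃ i, T (c i, y) := ⟨i, h⟩
  rw [decode, dif_pos hex]
  exact hex.choose_spec

lemma oneshot {A B : Type*} [Fintype A] [Fintype B]
    (W : A → B → ℝ) (hW : ∀ a, IsPmf (W a))
    (P : A → ℝ) (hP : IsPmf P)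
    (T : A × B → Prop) (M : ℕ) (hM : 1 ≤ M) (α β : ℝ)
    (hα : 1 - α ≤ ∑ z ∈ Finset.univ.filter (fun z : A × B => T z), P z.1 * W z.1 z.2)
    (hβ : ∑ z ∈ Finset.univ.filter (fun z : A × B => T z),
        P z.1 * (∑ a, P a * W a z.2) ≤ β) :
    IsCode W M (α + M * β) := by
  classical
  have hP0 := hP.1
  have hW0 : ∀ a b, 0 ≤ W a b := fun a b => (hW a).1 b
  set g : (Fin M → A) → B → Fin M := fun c y => decode T hM c y with hg
  set w : (Fin M → A) → ℝ := fun c => ∏ k, P (c k) with hwdef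
  have hw0 : ∀ c, 0 ≤ w c := fun c => Finset.prod_nonneg fun k _ => hP0 _
  have hw1 : ∑ c : Fin M → A, w c = 1 := by
    calc ∑ c : Fin M → A, ∏ k, P (c k)
        = ∏ _k : Fin M, ∑ a, P a := (Fintype.prod_sum (fun (_ : Fin M) (a : A) => P a)).symm
      _ = 1 := by simp [hP.2]
  set Err : (Fin M → A) → ℝ :=
    fun c => ∑ i : Fin M, ∑ y : B, (if g c y ≠ i then W (c i) y else 0) with hErrdef
  set A1 : ℝ := ∑ z ∈ Finset.univ.filter (fun z : A × B => ¬ T z), P z.1 * W z.1 z.2 with hA1def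
  set B1 : ℝ := ∑ z ∈ Finset.univ.filter (fun z : A × B => T z),
    P z.1 * (∑ a, P a * W a z.2) with hB1def
  -- expectations
  have claim1 : ∀ i : Fin M,
      ∑ c : Fin M → A, w c * (∑ y, if ¬ T (c i, y) then W (c i) y else 0) = A1 := by
    intro i
    rw [expAux1 P hP.2 i (fun a => ∑ y, if ¬ T (a, y) then W a y else 0)]
    rw [hA1def, Finset.sum_filter, Fintype.sum_prod_type]
    refine Finset.sum_congr rfl fun a _ => ?_
    rw [Finset.mul_sum]
    refine Finset.sum_congr rfl fun y _ => ?_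
    split_ifs <;> ring
  have claim2 : ∀ i j : Fin M, j ≠ i →
      ∑ c : Fin M → A, w c * (∑ y, if T (c j, y) then W (c i) y else 0) = B1 := by
    intro i j hij
    calc ∑ c : Fin M → A, w c * (∑ y, if T (c j, y) then W (c i) y else 0)
        = ∑ c : Fin M → A, ∑ y, w c * ((fun a => W a y) (c i)
            * ((fun a => if T (a, y) then (1:ℝ) else 0) (c j))) := by
          refine Finset.sum_congr rfl fun c _ => ?_
          rw [Finset.mul_sum]
          refine Finset.sum_congr rfl fun y _ => ?_
          simp only
          split_ifs <;> ring
      _ = ∑ y : B, ∑ c : Fin M → A, w c * ((fun a => W a y) (c i)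
            * ((fun a => if T (a, y) then (1:ℝ) else 0) (c j))) := Finset.sum_comm
      _ = ∑ y : B, (∑ a, P a * W a y) * (∑ a, P a * (if T (a, y) then (1:ℝ) else 0)) := by
          refine Finset.sum_congr rfl fun y _ => ?_
          exact expAux2 P hP.2 (Ne.symm hij) (fun a => W a y)
            (fun a => if T (a, y) then (1:ℝ) else 0)
      _ = B1 := by
          have hB1' : B1 = ∑ y : B, (∑ a, P a * W a y)
              * (∑ a, P a * (if T (a, y) then (1:ℝ) else 0)) := by
            rw [hB1def, Finset.sum_filter, Fintype.sum_prod_type]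
            rw [Finset.sum_comm]
            refine Finset.sum_congr rfl fun y _ => ?_
            rw [mul_comm, Finset.sum_mul]
            refine Finset.sum_congr rfl fun a _ => ?_
            split_ifs <;> ring
          rw [hB1']
  -- pointwise key bound
  have key : ∀ (c : Fin M → A) (i : Fin M) (y : B),
      (if g c y ≠ i then W (c i) y else 0)
      ≤ (if ¬ T (c i, y) then W (c i) y else 0)
        + ∑ j ∈ Finset.univ.filter (fun j => j ≠ i), (if T (c j, y) then W (c i) y else 0) := by
    intro c i y
    have hterm1 : (0:ℝ) ≤ (if ¬ T (c i, y) then W (c i) y else 0) := by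
      split_ifs <;> first | exact hW0 _ _ | exact le_rfl
    have hterm2 : ∀ j ∈ Finset.univ.filter (fun j : Fin M => j ≠ i),
        (0:ℝ) ≤ (if T (c j, y) then W (c i) y else 0) := by
      intro j _; split_ifs <;> first | exact hW0 _ _ | exact le_rfl
    by_cases hgi : g c y = i
    · rw [if_neg (by simp [hgi])]
      exact add_nonneg hterm1 (Finset.sum_nonneg hterm2)
    · rw [if_pos hgi]
      by_cases hT : T (c i, y)
      · have hj : T (c (g c y), y) := decode_spec T hM c y i hT
        have hmem : g c y ∈ Finset.univ.filter (fun j : Fin M => j ≠ i) := by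
          simp [hgi]
        have hsingle : W (c i) y ≤ ∑ j ∈ Finset.univ.filter (fun j => j ≠ i),
            (if T (c j, y) then W (c i) y else 0) := by
          have := Finset.single_le_sum hterm2 hmem
          rwa [if_pos hj] at this
        linarith
      · rw [if_pos hT]
        have := Finset.sum_nonneg hterm2
        linarith
  -- average error bound
  have hB10 : 0 ≤ B1 := by
    rw [hB1def]
    refine Finset.sum_nonneg fun z _ => mul_nonneg (hP0 _) ?_
    exact Finset.sum_nonneg fun a _ => mul_nonneg (hP0 _) (hW0 _ _)
  have hβ0 : 0 ≤ β := le_trans hB10 hβ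
  have hA1α : A1 ≤ α := by
    have htot : ∑ z : A × B, P z.1 * W z.1 z.2 = 1 := by
      rw [Fintype.sum_prod_type]
      calc ∑ a : A, ∑ b : B, P a * W a b = ∑ a : A, P a * ∑ b : B, W a b := by
            refine Finset.sum_congr rfl fun a _ => (Finset.mul_sum _ _ _).symm
        _ = 1 := by
            simp only [fun a : A => (hW a).2, mul_one]; exact hP.2
    have hsplit := Finset.sum_filter_add_sum_filter_not Finset.univ
      (fun z : A × B => T z) (fun z : A × B => P z.1 * W z.1 z.2)
    rw [htot] at hsplit
    rw [hA1def]
    linarith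
  have havg : ∑ c : Fin M → A, w c * Err c ≤ (M:ℝ) * (α + M * β) := by
    have step1 : ∑ c : Fin M → A, w c * Err c
        = ∑ i : Fin M, ∑ c : Fin M → A, ∑ y : B,
            w c * (if g c y ≠ i then W (c i) y else 0) := by
      rw [Finset.sum_comm]
      refine Finset.sum_congr rfl fun c _ => ?_
      rw [hErrdef]
      simp only [Finset.mul_sum]
    have step2 : ∀ i : Fin M, ∑ c : Fin M → A, ∑ y : B,
        w c * (if g c y ≠ i then W (c i) y else 0)
        ≤ A1 + (↑(M - 1) : ℝ) * B1 := by
      intro i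
      have hle : ∑ c : Fin M → A, ∑ y : B, w c * (if g c y ≠ i then W (c i) y else 0)
          ≤ ∑ c : Fin M → A, ∑ y : B, w c * ((if ¬ T (c i, y) then W (c i) y else 0)
            + ∑ j ∈ Finset.univ.filter (fun j => j ≠ i),
                (if T (c j, y) then W (c i) y else 0)) := by
        refine Finset.sum_le_sum fun c _ => Finset.sum_le_sum fun y _ => ?_
        exact mul_le_mul_of_nonneg_left (key c i y) (hw0 c)
      refine hle.trans ?_
      have hsplit : ∑ c : Fin M → A, ∑ y : B, w c * ((if ¬ T (c i, y) then W (c i) y else 0)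
            + ∑ j ∈ Finset.univ.filter (fun j => j ≠ i),
                (if T (c j, y) then W (c i) y else 0))
          = (∑ c : Fin M → A, w c * (∑ y, if ¬ T (c i, y) then W (c i) y else 0))
            + ∑ j ∈ Finset.univ.filter (fun j => j ≠ i),
              ∑ c : Fin M → A, w c * (∑ y, if T (c j, y) then W (c i) y else 0) := by
        have per_c : ∀ c : Fin M → A,
            ∑ y : B, w c * ((if ¬ T (c i, y) then W (c i) y else 0)
              + ∑ j ∈ Finset.univ.filter (fun j => j ≠ i),
                  (if T (c j, y) then W (c i) y else 0))
            = w c * (∑ y, if ¬ T (c i, y) then W (c i) y else 0)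
              + ∑ j ∈ Finset.univ.filter (fun j => j ≠ i),
                  w c * (∑ y, if T (c j, y) then W (c i) y else 0) := by
          intro c
          calc ∑ y : B, w c * ((if ¬ T (c i, y) then W (c i) y else 0)
                + ∑ j ∈ Finset.univ.filter (fun j => j ≠ i),
                    (if T (c j, y) then W (c i) y else 0))
              = ∑ y : B, (w c * (if ¬ T (c i, y) then W (c i) y else 0)
                + ∑ j ∈ Finset.univ.filter (fun j => j ≠ i),
                    w c * (if T (c j, y) then W (c i) y else 0)) := by
                refine Finset.sum_congr rfl fun y _ => ?_
                rw [mul_add, Finset.mul_sum]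
            _ = (∑ y : B, w c * (if ¬ T (c i, y) then W (c i) y else 0))
                + ∑ y : B, ∑ j ∈ Finset.univ.filter (fun j => j ≠ i),
                    w c * (if T (c j, y) then W (c i) y else 0) :=
                Finset.sum_add_distrib
            _ = w c * (∑ y, if ¬ T (c i, y) then W (c i) y else 0)
              + ∑ j ∈ Finset.univ.filter (fun j => j ≠ i),
                  w c * (∑ y, if T (c j, y) then W (c i) y else 0) := by
                rw [← Finset.mul_sum, Finset.sum_comm]
                congr 1
                exact Finset.sum_congr rfl fun j _ => (Finset.mul_sum _ _ _).symm
        calc ∑ c : Fin M → A, ∑ y : B, w c * ((if ¬ T (c i, y) then W (c i) y else 0)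
              + ∑ j ∈ Finset.univ.filter (fun j => j ≠ i),
                  (if T (c j, y) then W (c i) y else 0))
            = ∑ c : Fin M → A, (w c * (∑ y, if ¬ T (c i, y) then W (c i) y else 0)
              + ∑ j ∈ Finset.univ.filter (fun j => j ≠ i),
                  w c * (∑ y, if T (c j, y) then W (c i) y else 0)) :=
              Finset.sum_congr rfl fun c _ => per_c c
          _ = (∑ c : Fin M → A, w c * (∑ y, if ¬ T (c i, y) then W (c i) y else 0))
              + ∑ c : Fin M → A, ∑ j ∈ Finset.univ.filter (fun j => j ≠ i),
                  w c * (∑ y, if T (c j, y) then W (c i) y else 0) :=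
              Finset.sum_add_distrib
          _ = (∑ c : Fin M → A, w c * (∑ y, if ¬ T (c i, y) then W (c i) y else 0))
            + ∑ j ∈ Finset.univ.filter (fun j => j ≠ i),
              ∑ c : Fin M → A, w c * (∑ y, if T (c j, y) then W (c i) y else 0) := by
              rw [Finset.sum_comm]
      rw [hsplit, claim1 i]
      have : ∑ j ∈ Finset.univ.filter (fun j => j ≠ i),
          ∑ c : Fin M → A, w c * (∑ y, if T (c j, y) then W (c i) y else 0)
          = (↑(M - 1) : ℝ) * B1 := by
        calc ∑ j ∈ Finset.univ.filter (fun j => j ≠ i),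
            ∑ c : Fin M → A, w c * (∑ y, if T (c j, y) then W (c i) y else 0)
            = ∑ j ∈ Finset.univ.filter (fun j : Fin M => j ≠ i), B1 :=
              Finset.sum_congr rfl fun j hj =>
                claim2 i j (Finset.mem_filter.1 hj).2
          _ = (↑(M - 1) : ℝ) * B1 := by
              rw [Finset.sum_const, nsmul_eq_mul]
              congr 2
              rw [Finset.filter_ne', Finset.card_erase_of_mem (Finset.mem_univ i),
                Finset.card_univ, Fintype.card_fin]
      rw [this]
    calc ∑ c : Fin M → A, w c * Err c
        ≤ ∑ _i : Fin M, (A1 + (↑(M - 1) : ℝ) * B1) := by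
          rw [step1]; exact Finset.sum_le_sum fun i _ => step2 i
      _ = (M:ℝ) * (A1 + (↑(M - 1) : ℝ) * B1) := by
          rw [Finset.sum_const, nsmul_eq_mul, Finset.card_univ, Fintype.card_fin]
      _ ≤ (M:ℝ) * (α + M * β) := by
          have h1 : (↑(M - 1) : ℝ) * B1 ≤ (M:ℝ) * β := by
            have hc : (↑(M - 1) : ℝ) ≤ (M:ℝ) := Nat.cast_le.2 (Nat.sub_le M 1)
            calc (↑(M - 1) : ℝ) * B1 ≤ (M:ℝ) * B1 :=
                  mul_le_mul_of_nonneg_right hc hB10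
              _ ≤ (M:ℝ) * β := mul_le_mul_of_nonneg_left hβ (by positivity)
          have hMnn : (0:ℝ) ≤ (M:ℝ) := Nat.cast_nonneg M
          nlinarith [hA1α, h1]
  obtain ⟨c, hc⟩ := exists_le_of_weighted w Err hw0 hw1 _ havg
  refine ⟨c, g c, ?_⟩
  have herr : ∑ i : Fin M, ∑ y ∈ Finset.univ.filter (fun y => g c y ≠ i), W (c i) y
      = Err c := by
    rw [hErrdef]
    exact Finset.sum_congr rfl fun i _ => Finset.sum_filter _ _
  rw [herr]
  have hMpos : (0:ℝ) < (M:ℝ) := by exact_mod_cast Nat.lt_of_lt_of_le Nat.zero_lt_one hM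
  calc (1 / (M:ℝ)) * Err c ≤ (1 / (M:ℝ)) * ((M:ℝ) * (α + (M:ℝ) * β)) :=
        mul_le_mul_of_nonneg_left hc (by positivity)
    _ = α + (M:ℝ) * β := by field_simp

lemma negLog2_bound {q r : ℝ} (hq : 0 ≤ q) (h : (r : EReal) < negLog2 q) :
    q ≤ (2:ℝ) ^ (-r) := by
  rw [negLog2] at h
  split_ifs at h with h0
  · rw [h0]; positivity
  · have hq' : 0 < q := lt_of_le_of_ne hq (Ne.symm h0)
    have h2 : r < -Real.logb 2 q := by exact_mod_cast h
    have h3 : Real.logb 2 q < -r := by linarith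
    exact ((Real.logb_lt_iff_lt_rpow one_lt_two hq').1 h3).le

lemma extract {A B : Type*} [Fintype A] [Fintype B]
    (W : A → B → ℝ) (hW : ∀ a, IsPmf (W a)) (δ : ℝ) (r : ℝ)
    (hr : (r : EReal) < supD0 W δ) (M : ℕ) (hM : 1 ≤ M) :
    IsCode W M (2*δ + M * (2 * (2:ℝ) ^ (-r))) := by
  rw [supD0, lt_iSup_iff] at hr
  obtain ⟨PX, hPX⟩ := hr
  rw [D0smooth, lt_sSup_iff] at hPX
  obtain ⟨v, ⟨Φ, hΦ, hΦP, rfl⟩, hv⟩ := hPX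
  set P : A → ℝ := PX.1 with hPdef
  have hP0 : ∀ a, 0 ≤ P a := PX.2.1
  have hPsum : ∑ a, P a = 1 := PX.2.2
  have hW0 : ∀ a b, 0 ≤ W a b := fun a b => (hW a).1 b
  set q : ℝ := ∑ z : A × B, Φ z * (P z.1 * ∑ a, P a * W a z.2) with hqdef
  have hq0 : 0 ≤ q := Finset.sum_nonneg fun z _ => mul_nonneg (hΦ z).1
    (mul_nonneg (hP0 _) (Finset.sum_nonneg fun a _ => mul_nonneg (hP0 _) (hW0 _ _)))
  have hq2 : q ≤ (2:ℝ)^(-r) := negLog2_bound hq0 hv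
  set T : A × B → Prop := fun z => (1:ℝ)/2 ≤ Φ z with hTdef
  have htot : ∑ z : A × B, P z.1 * W z.1 z.2 = 1 := by
    rw [Fintype.sum_prod_type]
    calc ∑ a : A, ∑ b : B, P a * W a b = ∑ a : A, P a * ∑ b : B, W a b := by
          refine Finset.sum_congr rfl fun a _ => (Finset.mul_sum _ _ _).symm
      _ = 1 := by simp only [fun a : A => (hW a).2, mul_one]; exact hPsum
  have hΦP' : 1 - δ ≤ ∑ z : A × B, Φ z * (P z.1 * W z.1 z.2) := hΦP
  have hTcU : ∑ z ∈ Finset.univ.filter (fun z : A × B => ¬ T z),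
      P z.1 * W z.1 z.2 ≤ 2*δ := by
    have hstep : ∀ z ∈ Finset.univ.filter (fun z : A × B => ¬ T z),
        P z.1 * W z.1 z.2 ≤ 2*((1 - Φ z) * (P z.1 * W z.1 z.2)) := by
      intro z hz
      have hz1 : ¬ ((1:ℝ)/2 ≤ Φ z) := (Finset.mem_filter.1 hz).2
      push_neg at hz1
      have h0 : 0 ≤ P z.1 * W z.1 z.2 := mul_nonneg (hP0 _) (hW0 _ _)
      nlinarith
    calc ∑ z ∈ Finset.univ.filter (fun z : A × B => ¬ T z), P z.1 * W z.1 z.2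
        ≤ ∑ z ∈ Finset.univ.filter (fun z : A × B => ¬ T z),
            2*((1 - Φ z) * (P z.1 * W z.1 z.2)) := Finset.sum_le_sum hstep
      _ ≤ ∑ z : A × B, 2*((1 - Φ z) * (P z.1 * W z.1 z.2)) :=
          Finset.sum_le_sum_of_subset_of_nonneg (Finset.filter_subset _ _)
            (fun z _ _ => by nlinarith [(hΦ z).2, mul_nonneg (hP0 z.1) (hW0 z.1 z.2)])
      _ = 2*(1 - ∑ z : A × B, Φ z * (P z.1 * W z.1 z.2)) := by
          rw [← Finset.mul_sum]
          congr 1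
          have e0 : ∀ z : A × B, (1 - Φ z) * (P z.1 * W z.1 z.2)
              = P z.1 * W z.1 z.2 - Φ z * (P z.1 * W z.1 z.2) := fun z => by ring
          rw [Finset.sum_congr rfl fun z _ => e0 z, Finset.sum_sub_distrib, htot]
      _ ≤ 2*δ := by linarith
  have hα : 1 - 2*δ ≤ ∑ z ∈ Finset.univ.filter (fun z : A × B => T z),
      P z.1 * W z.1 z.2 := by
    have hsplit := Finset.sum_filter_add_sum_filter_not Finset.univ
      (fun z : A × B => T z) (fun z : A × B => P z.1 * W z.1 z.2)
    rw [htot] at hsplit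
    linarith
  have hβ : ∑ z ∈ Finset.univ.filter (fun z : A × B => T z),
      P z.1 * (∑ a, P a * W a z.2) ≤ 2 * (2:ℝ)^(-r) := by
    have hQ0 : ∀ z : A × B, 0 ≤ P z.1 * (∑ a, P a * W a z.2) := fun z =>
      mul_nonneg (hP0 _) (Finset.sum_nonneg fun a _ => mul_nonneg (hP0 _) (hW0 _ _))
    have hstep : ∀ z ∈ Finset.univ.filter (fun z : A × B => T z),
        P z.1 * (∑ a, P a * W a z.2) ≤ 2*(Φ z * (P z.1 * (∑ a, P a * W a z.2))) := by
      intro z hz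
      have hz1 : (1:ℝ)/2 ≤ Φ z := (Finset.mem_filter.1 hz).2
      nlinarith [hQ0 z]
    calc ∑ z ∈ Finset.univ.filter (fun z : A × B => T z), P z.1 * (∑ a, P a * W a z.2)
        ≤ ∑ z ∈ Finset.univ.filter (fun z : A × B => T z),
            2*(Φ z * (P z.1 * (∑ a, P a * W a z.2))) := Finset.sum_le_sum hstep
      _ ≤ ∑ z : A × B, 2*(Φ z * (P z.1 * (∑ a, P a * W a z.2))) :=
          Finset.sum_le_sum_of_subset_of_nonneg (Finset.filter_subset _ _)
            (fun z _ _ => by nlinarith [(hΦ z).1, hQ0 z])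
      _ = 2 * q := by rw [← Finset.mul_sum, hqdef]
      _ ≤ 2 * (2:ℝ)^(-r) := by linarith
  exact oneshot W hW P ⟨hP0, hPsum⟩ T M hM (2*δ) (2*(2:ℝ)^(-r)) hα hβ

/-- Capacity lower bound: every rate `R` below
`lim_{ε↓0} liminf_n (1/n)·sup_{P_{Xⁿ}} D₀^ε(P_{XⁿYⁿ}‖P_{Xⁿ}×P_{Yⁿ})` is achievable
by codes with vanishing error probability; hence `C` is at least this limit. -/
theorem capacity_lower_bound {X Y : Type*} [Fintype X] [Fintype Y]
    (C : ∀ n : ℕ, (Fin n → X) → (Fin n → Y) → ℝ)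
    (hC : ∀ n xs, IsPmf (C n xs)) (R : ℝ)
    (hR : (R : EReal) < ⨅ (ε : ℝ) (_ : 0 < ε),
        liminf (fun n : ℕ => ((1 / (n:ℝ) : ℝ) : EReal) * supD0 (C n) ε) atTop) :
    ∃ (N : ℕ) (M : ℕ → ℕ) (e : ℕ → ℝ),
      Tendsto e atTop (nhds 0) ∧
      ∀ n, N ≤ n → 1 ≤ M n ∧ IsCode (C n) (M n) (e n) ∧
        R ≤ (1 / (n:ℝ)) * Real.logb 2 (M n) := by
  rcases le_or_gt R 0 with hR0 | hRpos
  · -- trivial case `R ≤ 0`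
    have hXne : Nonempty X := by
      by_contra hX
      rw [not_nonempty_iff] at hX
      have hbot : ∀ n : ℕ, 1 ≤ n →
          ((1 / (n:ℝ) : ℝ) : EReal) * supD0 (C n) 1 = ⊥ := by
        intro n hn
        have hE : IsEmpty { p : (Fin n → X) → ℝ // IsPmf p } := by
          constructor
          rintro ⟨p, hp0, hp1⟩
          have hfe : IsEmpty (Fin n → X) := ⟨fun f => hX.false (f ⟨0, hn⟩)⟩
          rw [Finset.univ_eq_empty, Finset.sum_empty] at hp1
          exact one_ne_zero hp1.symm
        rw [supD0, iSup_of_empty]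
        have hpos : (0:ℝ) < 1 / (n:ℝ) := by
          have : (0:ℝ) < (n:ℝ) := by exact_mod_cast hn
          positivity
        exact EReal.coe_mul_bot_of_pos hpos
      have hlim : liminf (fun n : ℕ => ((1 / (n:ℝ) : ℝ) : EReal) * supD0 (C n) 1) atTop
          = ⊥ := by
        have hcongr : ∀ᶠ n : ℕ in atTop,
            ((1 / (n:ℝ) : ℝ) : EReal) * supD0 (C n) 1 = (fun _ : ℕ => (⊥ : EReal)) n := by
          filter_upwards [eventually_ge_atTop 1] with n hn
          exact hbot n hn
        rw [liminf_congr hcongr, liminf_const]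
      have hcon : (R : EReal) < ⊥ := by
        refine lt_of_lt_of_le (lt_of_lt_of_le hR (iInf₂_le 1 one_pos)) ?_
        rw [hlim]
      exact absurd hcon (by simp)
    refine ⟨0, fun _ => 1, fun _ => 0, tendsto_const_nhds, ?_⟩
    intro n _
    refine ⟨le_rfl, ⟨fun _ => fun _ => hXne.some, fun _ => 0, ?_⟩, ?_⟩
    · have h0 : ∀ i : Fin 1,
          Finset.univ.filter (fun _y : Fin n → Y => (0 : Fin 1) ≠ i) = ∅ := by
        intro i
        apply Finset.filter_false_of_mem
        intro y _
        simp [Subsingleton.elim (0 : Fin 1) i]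
      simp [h0]
    · simpa using hR0
  · -- main case `0 < R`
    have claim : ∀ k : ℕ, ∃ N : ℕ, 1 ≤ N ∧ ∀ n, N ≤ n →
        ∃ M : ℕ, 1 ≤ M ∧ IsCode (C n) M (3/((k:ℝ)+1)) ∧
          R ≤ (1/(n:ℝ)) * Real.logb 2 M := by
      intro k
      have hδ : (0:ℝ) < 1/((k:ℝ)+1) := by positivity
      set δ : ℝ := 1/((k:ℝ)+1) with hδdef
      have hlim : (R:EReal) < liminf
          (fun n : ℕ => ((1 / (n:ℝ) : ℝ) : EReal) * supD0 (C n) δ) atTop :=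
        lt_of_lt_of_le hR (iInf₂_le δ hδ)
      obtain ⟨R', hRR', hR'L⟩ := EReal.exists_between_coe_real hlim
      have hRR'' : R < R' := by exact_mod_cast hRR'
      have hev : ∀ᶠ n : ℕ in atTop,
          (R' : EReal) < ((1 / (n:ℝ) : ℝ) : EReal) * supD0 (C n) δ :=
        eventually_lt_of_lt_liminf hR'L
      obtain ⟨N₀, hN₀⟩ := eventually_atTop.1 hev
      set c₀ : ℝ := Real.logb 2 (4*((k:ℝ)+1)) with hc₀def
      have hc₀pos : 0 ≤ c₀ := Real.logb_nonneg one_lt_two (by nlinarith [Nat.cast_nonneg (α := ℝ) k])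
      refine ⟨max (max N₀ 1) ⌈c₀/(R'-R)⌉₊, le_trans (le_max_right N₀ 1) (le_max_left _ _), ?_⟩
      intro n hn
      have hn1 : 1 ≤ n := le_trans (le_trans (le_max_right N₀ 1) (le_max_left _ _)) hn
      have hnN₀ : N₀ ≤ n := le_trans (le_trans (le_max_left N₀ 1) (le_max_left _ _)) hn
      have hnpos : (0:ℝ) < (n:ℝ) := by exact_mod_cast hn1
      have hnc : c₀ ≤ (n:ℝ)*(R'-R) := by
        have h1 : ⌈c₀/(R'-R)⌉₊ ≤ n := le_trans (le_max_right _ _) hn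
        have h2 : c₀/(R'-R) ≤ (n:ℝ) := by
          refine le_trans (Nat.le_ceil _) ?_
          exact_mod_cast h1
        have h3 : (0:ℝ) < R' - R := by linarith
        calc c₀ = (c₀/(R'-R))*(R'-R) := by field_simp
          _ ≤ (n:ℝ)*(R'-R) := mul_le_mul_of_nonneg_right h2 h3.le
      set r : ℝ := (n:ℝ)*R + c₀ with hrdef
      have hrS : (r : EReal) < supD0 (C n) δ := by
        have hr1 : r ≤ (n:ℝ)*R' := by rw [hrdef]; nlinarith
        have hgen : ∀ T : EReal, (R' : EReal) < ((1 / (n:ℝ) : ℝ) : EReal) * T →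
            (((n:ℝ)*R' : ℝ) : EReal) < T := by
          intro T hT
          induction T using EReal.rec with
          | bot =>
            rw [EReal.coe_mul_bot_of_pos (by positivity : (0:ℝ) < 1/(n:ℝ))] at hT
            exact absurd hT (by simp)
          | coe s =>
            rw [← EReal.coe_mul] at hT
            have h4 : R' < (1/(n:ℝ))*s := EReal.coe_lt_coe_iff.1 hT
            have h5 : (n:ℝ)*R' < s := by
              have h6 := mul_lt_mul_of_pos_left h4 hnpos
              calc (n:ℝ)*R' < (n:ℝ)*((1/(n:ℝ))*s) := h6
                _ = s := by field_simp
            exact EReal.coe_lt_coe_iff.2 h5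
          | top => exact EReal.coe_lt_top _
        exact lt_of_le_of_lt (EReal.coe_le_coe_iff.2 hr1) (hgen _ (hN₀ n hnN₀))
      set M : ℕ := ⌈(2:ℝ)^((n:ℝ)*R)⌉₊ with hMdef
      have hM1 : 1 ≤ M := Nat.ceil_pos.2 (by positivity)
      have hcode := extract (C n) (hC n) δ r hrS M hM1
      refine ⟨M, hM1, ?_, ?_⟩
      · obtain ⟨f, g, hfg⟩ := hcode
        refine ⟨f, g, hfg.trans ?_⟩
        have hMle : (M:ℝ) ≤ 2*(2:ℝ)^((n:ℝ)*R) := by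
          have h1 : (M:ℝ) < (2:ℝ)^((n:ℝ)*R) + 1 := Nat.ceil_lt_add_one (by positivity)
          have h2 : (1:ℝ) ≤ (2:ℝ)^((n:ℝ)*R) :=
            Real.one_le_rpow one_le_two (by positivity)
          linarith
        have hpow : (2:ℝ)^((n:ℝ)*R) * (2:ℝ)^(-r) = (2:ℝ)^(-c₀) := by
          rw [← Real.rpow_add two_pos]
          congr 1
          rw [hrdef]; ring
        have hc₀val : (2:ℝ)^(-c₀) = 1/(4*((k:ℝ)+1)) := by
          rw [Real.rpow_neg (by norm_num : (0:ℝ) ≤ 2), hc₀def,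
            Real.rpow_logb two_pos (by norm_num) (by positivity), one_div]
        have hMr : (M:ℝ) * (2*(2:ℝ)^(-r)) ≤ 1/((k:ℝ)+1) := by
          calc (M:ℝ) * (2*(2:ℝ)^(-r)) ≤ (2*(2:ℝ)^((n:ℝ)*R)) * (2*(2:ℝ)^(-r)) :=
                mul_le_mul_of_nonneg_right hMle (by positivity)
            _ = 4 * ((2:ℝ)^((n:ℝ)*R) * (2:ℝ)^(-r)) := by ring
            _ = 4 * (2:ℝ)^(-c₀) := by rw [hpow]
            _ = 1/((k:ℝ)+1) := by rw [hc₀val]; field_simp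
        have h3 : (3:ℝ)/((k:ℝ)+1) = 2*(1/((k:ℝ)+1)) + 1/((k:ℝ)+1) := by ring
        rw [hδdef, h3]
        linarith
      · have h2 : (2:ℝ)^((n:ℝ)*R) ≤ (M:ℝ) := Nat.le_ceil _
        have hMpos : (0:ℝ) < (M:ℝ) := by exact_mod_cast hM1
        have h3 : (n:ℝ)*R ≤ Real.logb 2 (M:ℝ) :=
          (Real.le_logb_iff_rpow_le one_lt_two hMpos).2 h2
        calc R = (1/(n:ℝ)) * ((n:ℝ)*R) := by field_simp
          _ ≤ (1/(n:ℝ)) * Real.logb 2 (M:ℝ) :=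
            mul_le_mul_of_nonneg_left h3 (by positivity)
    -- diagonalization
    choose Nf hNf using claim
    set G : ℕ → ℕ := fun k => k + ∑ j ∈ Finset.range (k+1), Nf j with hGdef
    have hGk : ∀ k, k ≤ G k := fun k => Nat.le_add_right _ _
    have hNfG : ∀ k, Nf k ≤ G k := by
      intro k
      have h1 : Nf k ≤ ∑ j ∈ Finset.range (k+1), Nf j :=
        Finset.single_le_sum (fun j _ => Nat.zero_le _) (Finset.self_mem_range_succ k)
      exact le_trans h1 (Nat.le_add_left _ _)
    set K : ℕ → ℕ := fun n => Nat.findGreatest (fun k => G k ≤ n) n with hKdef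
    have hK1 : ∀ k n, G k ≤ n → k ≤ K n := fun k n h =>
      Nat.le_findGreatest ((hGk k).trans h) h
    have hK2 : ∀ n, G 1 ≤ n → G (K n) ≤ n := fun n h =>
      Nat.findGreatest_spec (P := fun k => G k ≤ n) ((hGk 1).trans h) h
    have hKtop : Tendsto K atTop atTop :=
      tendsto_atTop_atTop.2 fun k => ⟨G k, fun n hn => hK1 k n hn⟩
    set e : ℕ → ℝ := fun n => 3 / ((K n : ℝ) + 1) with hedef
    have htende : Tendsto e atTop (nhds 0) := by
      have h1 : Tendsto (fun n => ((K n : ℝ) + 1)) atTop atTop :=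
        tendsto_atTop_add_const_right atTop 1 (tendsto_natCast_atTop_atTop.comp hKtop)
      exact Tendsto.div_atTop tendsto_const_nhds h1
    have main : ∀ n, G 1 ≤ n →
        ∃ M, 1 ≤ M ∧ IsCode (C n) M (e n) ∧ R ≤ (1/(n:ℝ)) * Real.logb 2 M := by
      intro n hn
      exact (hNf (K n)).2 n ((hNfG (K n)).trans (hK2 n hn))
    choose! Mf hMf using main
    exact ⟨G 1, Mf, e, htende, fun n hn => hMf n hn⟩
end

section
/- (Capacity upper bound from converse) With the same setup, the capacity satisfies C ≤ lim_{ε↓0} liminf_{n→∞} (1/n) sup_{P_{X^n}} D₀^ε(P_{X^nY^n} ‖ P_{X^n} × P_{Y^n}). -/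
open scoped BigOperators Classical

open Filter

lemma oneshot_s18 {A B : Type*} [Fintype A] [Fintype B] (W : A → B → ℝ)
    (hW : ∀ a, IsPmf (W a)) (M : ℕ) (hM : 1 ≤ M) (ε : ℝ)
    (f : Fin M → A) (g : B → Fin M)
    (herr : (1 / M : ℝ) * ∑ i : Fin M,
      ∑ y ∈ Finset.univ.filter (fun y => g y ≠ i), W (f i) y ≤ ε) :
    ((Real.logb 2 M : ℝ) : EReal) ≤ supD0 W ε := by
  have hMpos : (0:ℝ) < M := by exact_mod_cast hM
  set N : A → ℕ := fun a => (Finset.univ.filter (fun i : Fin M => f i = a)).card with hN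
  set PX : A → ℝ := fun a => (N a : ℝ) / M with hPXdef
  have hsumN : ∑ a, (N a : ℝ) = M := by
    have h0 : (Finset.univ : Finset (Fin M)).card = ∑ a, N a :=
      Finset.card_eq_sum_card_fiberwise (fun x _ => Finset.mem_univ (f x))
    simp only [Finset.card_univ, Fintype.card_fin] at h0
    rw [← Nat.cast_sum, ← h0]
  have hPX : IsPmf PX := by
    constructor
    · intro a; exact div_nonneg (Nat.cast_nonneg _) hMpos.le
    · rw [hPXdef]; simp only [← Finset.sum_div, hsumN]; field_simp
  have hNg : ∀ b, 1 ≤ N (f (g b)) := by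
    intro b
    apply Finset.card_pos.2
    exact ⟨g b, by simp⟩
  have hNgR : ∀ b, (N (f (g b)) : ℝ) ≠ 0 := by
    intro b; exact_mod_cast Nat.one_le_iff_ne_zero.mp (hNg b)
  set Φ : A × B → ℝ := fun q => if f (g q.2) = q.1 then 1 / (N q.1 : ℝ) else 0 with hΦdef
  have hΦbd : ∀ q, 0 ≤ Φ q ∧ Φ q ≤ 1 := by
    intro q
    rw [hΦdef]
    dsimp only
    split_ifs with h
    · constructor
      · positivity
      · rw [div_le_one]
        · exact_mod_cast (h ▸ hNg q.2)
        · have := hNg q.2; rw [h] at this; exact_mod_cast Nat.lt_of_lt_of_le Nat.zero_lt_one this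
    · exact ⟨le_rfl, zero_le_one⟩
  -- key pointwise collapse
  have hcollapse : ∀ (V : A → B → ℝ) (b : B),
      ∑ a, Φ (a, b) * (PX a * V a b) = (1 / M) * V (f (g b)) b := by
    intro V b
    have : ∑ a, Φ (a, b) * (PX a * V a b)
        = ∑ a, (if f (g b) = a then (1 / (N a : ℝ)) * (PX a * V a b) else 0) := by
      apply Finset.sum_congr rfl
      intro a _
      rw [hΦdef]; dsimp only; split_ifs <;> simp
    rw [this, Finset.sum_ite_eq]
    simp only [Finset.mem_univ, if_true, hPXdef]
    field_simp
    exact mul_div_cancel_left₀ _ (hNgR b)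
  -- P-sum
  have hPsum : 1 - ε ≤ ∑ q : A × B, Φ q * (PX q.1 * W q.1 q.2) := by
    have h1 : ∑ q : A × B, Φ q * (PX q.1 * W q.1 q.2)
        = ∑ b, (1 / (M:ℝ)) * W (f (g b)) b := by
      rw [Fintype.sum_prod_type, Finset.sum_comm]
      exact Finset.sum_congr rfl fun b _ => hcollapse W b
    rw [h1, ← Finset.mul_sum]
    have h2 : ∑ b, W (f (g b)) b = ∑ i : Fin M, ∑ b ∈ Finset.univ.filter (fun b => g b = i), W (f i) b := by
      rw [← Finset.sum_fiberwise Finset.univ g (fun b => W (f (g b)) b)]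
      apply Finset.sum_congr rfl; intro i _
      apply Finset.sum_congr rfl; intro b hb
      rw [Finset.mem_filter] at hb
      rw [hb.2]
    have h3 : ∀ i : Fin M, ∑ b ∈ Finset.univ.filter (fun b => g b = i), W (f i) b
        = 1 - ∑ b ∈ Finset.univ.filter (fun b => g b ≠ i), W (f i) b := by
      intro i
      have := Finset.sum_filter_add_sum_filter_not Finset.univ (fun b => g b = i) (W (f i))
      rw [(hW (f i)).2] at this
      linarith [this]
    rw [h2]
    rw [Finset.sum_congr rfl (fun i _ => h3 i)]
    rw [Finset.sum_sub_distrib]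
    simp only [Finset.sum_const, Finset.card_univ, Fintype.card_fin, nsmul_eq_mul, mul_one]
    rw [mul_sub]
    have : (1 / (M:ℝ)) * M = 1 := by field_simp
    rw [this]
    linarith [herr]
  -- Q-sum
  have hQsum : ∑ q : A × B, Φ q * (PX q.1 * ∑ a, PX a * W a q.2) = 1 / M := by
    have h1 : ∑ q : A × B, Φ q * (PX q.1 * ∑ a, PX a * W a q.2)
        = ∑ b, (1 / (M:ℝ)) * ((fun a b => ∑ a', PX a' * W a' b) (f (g b)) b) := by
      rw [Fintype.sum_prod_type, Finset.sum_comm]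
      exact Finset.sum_congr rfl fun b _ => hcollapse (fun a b => ∑ a', PX a' * W a' b) b
    rw [h1]
    dsimp only
    rw [← Finset.mul_sum, Finset.sum_comm]
    have : ∑ a', ∑ b, PX a' * W a' b = 1 := by
      have : ∀ a', ∑ b, PX a' * W a' b = PX a' := by
        intro a'; rw [← Finset.mul_sum, (hW a').2, mul_one]
      rw [Finset.sum_congr rfl (fun a' _ => this a'), hPX.2]
    rw [this, mul_one]
  -- conclude
  have hlog : negLog2 (∑ q : A × B, Φ q * (PX q.1 * ∑ a, PX a * W a q.2))
      = ((Real.logb 2 M : ℝ) : EReal) := by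
    rw [hQsum, negLog2, if_neg (by positivity)]
    congr 1
    rw [one_div, Real.logb_inv]
    ring
  calc ((Real.logb 2 M : ℝ) : EReal)
      ≤ D0smooth (fun q : A × B => PX q.1 * W q.1 q.2)
        (fun q : A × B => PX q.1 * ∑ a, PX a * W a q.2) ε := by
        apply le_sSup
        exact ⟨Φ, hΦbd, hPsum, hlog.symm⟩
    _ ≤ supD0 W ε := le_iSup (fun PX : { p : A → ℝ // IsPmf p } =>
        D0smooth (fun q : A × B => PX.1 q.1 * W q.1 q.2)
          (fun q : A × B => PX.1 q.1 * ∑ a, PX.1 a * W a q.2) ε) ⟨PX, hPX⟩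

/-- Capacity upper bound: any rate `R` achievable with vanishing error probability
satisfies `R ≤ lim_{ε↓0} liminf_n (1/n)·sup_{P_{Xⁿ}} D₀^ε(P_{XⁿYⁿ}‖P_{Xⁿ}×P_{Yⁿ})`. -/
theorem capacity_upper_bound {X Y : Type*} [Fintype X] [Fintype Y]
    (C : ∀ n : ℕ, (Fin n → X) → (Fin n → Y) → ℝ)
    (hC : ∀ n xs, IsPmf (C n xs)) (R : ℝ)
    (M : ℕ → ℕ) (e : ℕ → ℝ)
    (hcodes : ∀ n, 1 ≤ n → 1 ≤ M n ∧ IsCode (C n) (M n) (e n) ∧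
        R ≤ (1 / (n:ℝ)) * Real.logb 2 (M n))
    (he : Tendsto e atTop (nhds 0)) :
    (R : EReal) ≤ ⨅ (ε : ℝ) (_ : 0 < ε),
        liminf (fun n : ℕ => ((1 / (n:ℝ) : ℝ) : EReal) * supD0 (C n) ε) atTop := by
  refine le_iInf fun ε => le_iInf fun hε => ?_
  have hev : ∀ᶠ n : ℕ in atTop, (R : EReal) ≤ ((1 / (n:ℝ) : ℝ) : EReal) * supD0 (C n) ε := by
    filter_upwards [eventually_ge_atTop 1, he.eventually (eventually_lt_nhds hε)]
      with n hn hen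
    obtain ⟨hM, ⟨f, g, herr⟩, hR⟩ := hcodes n hn
    have h1 : ((Real.logb 2 (M n) : ℝ) : EReal) ≤ supD0 (C n) ε :=
      oneshot_s18 (C n) (hC n) (M n) hM ε f g (herr.trans hen.le)
    have hn0 : (0:ℝ) < (n:ℝ) := by exact_mod_cast hn
    calc (R : EReal) ≤ (((1 / (n:ℝ)) * Real.logb 2 (M n) : ℝ) : EReal) := by
          exact_mod_cast hR
      _ = ((1 / (n:ℝ) : ℝ) : EReal) * ((Real.logb 2 (M n) : ℝ) : EReal) := by
          rw [EReal.coe_mul]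
      _ ≤ ((1 / (n:ℝ) : ℝ) : EReal) * supD0 (C n) ε := by
          apply mul_le_mul_of_nonneg_left h1
          exact_mod_cast (by positivity : (0:ℝ) ≤ 1 / (n:ℝ))
  calc (R : EReal) = liminf (fun _ : ℕ => (R : EReal)) atTop := (liminf_const _).symm
    _ ≤ liminf (fun n : ℕ => ((1 / (n:ℝ) : ℝ) : EReal) * supD0 (C n) ε) atTop :=
        liminf_le_liminf hev
end

section
/- (ε-capacity upper bound) For any general channel with finite alphabets and any ε ∈ (0,1), the ε-capacity satisfies C_ε ≤ liminf_{n→∞} (1/n) sup_{P_{X^n}} D₀^ε(P_{X^nY^n} ‖ P_{X^n} × P_{Y^n}). -/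
open scoped BigOperators Classical

open Filter

lemma single_shot {A B : Type*} [Fintype A] [Fintype B] (W : A → B → ℝ)
    (hW : ∀ a, IsPmf (W a)) (ε : ℝ) (M : ℕ) (hM : 1 ≤ M)
    (hcode : IsCode W M ε) :
    (Real.logb 2 M : EReal) ≤ supD0 W ε := by
  obtain ⟨f, g, herr⟩ := hcode
  have hMpos : (0:ℝ) < M := by exact_mod_cast hM
  set Nc : A → ℕ := fun a => (Finset.univ.filter (fun i : Fin M => f i = a)).card with hNcdef
  have hNi : ∀ i : Fin M, 0 < Nc (f i) := fun i =>
    Finset.card_pos.2 ⟨i, by simp [hNcdef]⟩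
  set PX : A → ℝ := fun a => (Nc a : ℝ) / M with hPXdef
  have hsumN : ∑ a, (Nc a : ℝ) = M := by
    have h := Finset.card_eq_sum_card_fiberwise
      (f := f) (s := (Finset.univ : Finset (Fin M))) (t := Finset.univ) (by simp)
    have : (M : ℕ) = ∑ a, Nc a := by simpa [hNcdef] using h
    exact_mod_cast this.symm
  have hPXpmf : IsPmf PX := by
    constructor
    · intro a; exact div_nonneg (Nat.cast_nonneg _) hMpos.le
    · rw [hPXdef]; rw [← Finset.sum_div, hsumN, div_self hMpos.ne']
  set Φ : A × B → ℝ := fun q => if f (g q.2) = q.1 then ((Nc q.1 : ℝ))⁻¹ else 0 with hΦdef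
  have hΦ01 : ∀ q, 0 ≤ Φ q ∧ Φ q ≤ 1 := by
    intro q
    rw [hΦdef]
    dsimp only
    split_ifs with h
    · have : 0 < Nc q.1 := h ▸ hNi (g q.2)
      have h1 : (1:ℝ) ≤ (Nc q.1 : ℝ) := by exact_mod_cast this
      constructor
      · positivity
      · exact inv_le_one_of_one_le₀ h1
    · exact ⟨le_refl 0, zero_le_one⟩
  -- inner sum collapse
  have hcollapse : ∀ (V : A → ℝ) (b : B),
      ∑ a, Φ (a, b) * V a = (Nc (f (g b)) : ℝ)⁻¹ * V (f (g b)) := by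
    intro V b
    rw [hΦdef]
    simp only [ite_mul, zero_mul]
    rw [Finset.sum_ite_eq]
    simp
  have hNfgb : ∀ b : B, ((Nc (f (g b)) : ℝ)) ≠ 0 := by
    intro b; exact_mod_cast (hNi (g b)).ne'
  -- Sum over product rewriting
  have hprod : ∀ V : A → B → ℝ,
      ∑ q : A × B, Φ q * V q.1 q.2 = ∑ b, (Nc (f (g b)) : ℝ)⁻¹ * V (f (g b)) b := by
    intro V
    rw [Fintype.sum_prod_type, Finset.sum_comm]
    exact Finset.sum_congr rfl fun b _ => hcollapse (fun a => V a b) b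
  -- Sum1 lower bound
  have hSum1 : 1 - ε ≤ ∑ q : A × B, Φ q * (PX q.1 * W q.1 q.2) := by
    have e1 : ∑ q : A × B, Φ q * (PX q.1 * W q.1 q.2)
        = (1/M) * ∑ b, W (f (g b)) b := by
      rw [hprod (fun a b => PX a * W a b), Finset.mul_sum]
      refine Finset.sum_congr rfl fun b _ => ?_
      rw [hPXdef]
      field_simp [hNfgb b]
    have e2 : ∑ b, W (f (g b)) b
        = ∑ i : Fin M, ∑ b ∈ Finset.univ.filter (fun b => g b = i), W (f i) b := by
      rw [← Finset.sum_fiberwise_of_maps_to (g := g) (t := Finset.univ) (by simp)]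
      refine Finset.sum_congr rfl fun i _ => Finset.sum_congr rfl fun b hb => ?_
      rw [(Finset.mem_filter.1 hb).2]
    have e3 : ∀ i : Fin M, ∑ b ∈ Finset.univ.filter (fun b => g b = i), W (f i) b
        = 1 - ∑ b ∈ Finset.univ.filter (fun b => g b ≠ i), W (f i) b := by
      intro i
      have := Finset.sum_filter_add_sum_filter_not Finset.univ (fun b => g b = i) (W (f i))
      rw [(hW (f i)).2] at this
      linarith
    have herr' : ∑ i : Fin M, ∑ b ∈ Finset.univ.filter (fun b => g b ≠ i), W (f i) b ≤ ε * M := by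
      rw [one_div, inv_mul_le_iff₀ hMpos] at herr
      linarith [herr]
    have e4 : ∑ b, W (f (g b)) b ≥ M * (1 - ε) := by
      rw [e2, Finset.sum_congr rfl fun i _ => e3 i, Finset.sum_sub_distrib]
      simp only [Finset.sum_const, Finset.card_univ, Fintype.card_fin, nsmul_eq_mul, mul_one]
      nlinarith [herr']
    rw [e1]
    rw [ge_iff_le] at e4
    have h5 : (1/(M:ℝ)) * ((M:ℝ)*(1-ε)) ≤ (1/(M:ℝ)) * ∑ b, W (f (g b)) b :=
      mul_le_mul_of_nonneg_left e4 (by positivity)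
    have h6 : (1/(M:ℝ)) * ((M:ℝ)*(1-ε)) = 1 - ε := by field_simp
    linarith
  -- Sum2 equals 1/M
  have hPY1 : ∑ b, ∑ a, PX a * W a b = 1 := by
    rw [Finset.sum_comm]
    have : ∀ a, ∑ b, PX a * W a b = PX a := by
      intro a; rw [← Finset.mul_sum, (hW a).2, mul_one]
    rw [Finset.sum_congr rfl fun a _ => this a, hPXpmf.2]
  have hSum2 : ∑ q : A × B, Φ q * (PX q.1 * ∑ a, PX a * W a q.2) = 1 / M := by
    rw [hprod (fun a b => PX a * ∑ a', PX a' * W a' b)]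
    have : ∀ b : B, (Nc (f (g b)) : ℝ)⁻¹ * (PX (f (g b)) * ∑ a', PX a' * W a' b)
        = (1/M) * ∑ a', PX a' * W a' b := by
      intro b
      rw [hPXdef]
      field_simp [hNfgb b]
    rw [Finset.sum_congr rfl fun b _ => this b, ← Finset.mul_sum, hPY1, mul_one]
  -- membership
  have hmem : (Real.logb 2 M : EReal) ∈
      { r : EReal | ∃ Φ' : A × B → ℝ, (∀ x, 0 ≤ Φ' x ∧ Φ' x ≤ 1) ∧
        1 - ε ≤ ∑ x, Φ' x * (PX x.1 * W x.1 x.2) ∧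
        r = negLog2 (∑ x, Φ' x * (PX x.1 * ∑ a, PX a * W a x.2)) } := by
    refine ⟨Φ, hΦ01, hSum1, ?_⟩
    rw [hSum2]
    have hneg : negLog2 (1/(M:ℝ)) = ((Real.logb 2 M : ℝ) : EReal) := by
      rw [negLog2, if_neg (by positivity)]
      congr 1
      simp only [Real.logb, one_div, Real.log_inv]
      ring
    rw [hneg]
  have hle : (Real.logb 2 M : EReal) ≤
      D0smooth (fun q : A × B => PX q.1 * W q.1 q.2)
        (fun q : A × B => PX q.1 * ∑ a, PX a * W a q.2) ε := le_sSup hmem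
  exact hle.trans (le_iSup (fun P : { p : A → ℝ // IsPmf p } =>
    D0smooth (fun q : A × B => P.1 q.1 * W q.1 q.2)
      (fun q : A × B => P.1 q.1 * ∑ a, P.1 a * W a q.2) ε) ⟨PX, hPXpmf⟩)

/-- `ε`-capacity upper bound: if rate `R` is achievable with error probability `ε`
for all sufficiently large `n`, then
`R ≤ liminf_n (1/n)·sup_{P_{Xⁿ}} D₀^ε(P_{XⁿYⁿ}‖P_{Xⁿ}×P_{Yⁿ})`. -/
theorem eps_capacity_upper_bound {X Y : Type*} [Fintype X] [Fintype Y]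
    (C : ∀ n : ℕ, (Fin n → X) → (Fin n → Y) → ℝ)
    (hC : ∀ n xs, IsPmf (C n xs))
    (ε : ℝ) (hε0 : 0 < ε) (hε1 : ε < 1) (R : ℝ)
    (hach : ∃ N : ℕ, ∀ n, N ≤ n → ∃ M : ℕ, 1 ≤ M ∧ IsCode (C n) M ε ∧
        R ≤ (1 / (n:ℝ)) * Real.logb 2 M) :
    (R : EReal) ≤ liminf
      (fun n : ℕ => ((1 / (n:ℝ) : ℝ) : EReal) * supD0 (C n) ε) atTop := by
  obtain ⟨N, hN⟩ := hach
  refine le_liminf_of_le (by isBoundedDefault) ?_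
  filter_upwards [eventually_ge_atTop (max N 1)] with n hn
  have hn1 : (1:ℕ) ≤ n := le_trans (le_max_right _ _) hn
  have hnN : N ≤ n := le_trans (le_max_left _ _) hn
  have hnpos : (0:ℝ) < n := by exact_mod_cast hn1
  obtain ⟨M, hM1, hcode, hR⟩ := hN n hnN
  have key := single_shot (C n) (hC n) ε M hM1 hcode
  rcases eq_top_or_lt_top (supD0 (C n) ε) with hS | hS
  · rw [hS, EReal.mul_top_of_pos (EReal.coe_pos.2 (by positivity))]
    exact le_top
  · have hbot : supD0 (C n) ε ≠ ⊥ := fun h => by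
      rw [h] at key; exact absurd key (by simp)
    lift supD0 (C n) ε to ℝ using ⟨hS.ne, hbot⟩ with x hx
    have hx' : Real.logb 2 M ≤ x := EReal.coe_le_coe_iff.1 key
    have hRx : R ≤ (1/(n:ℝ)) * x :=
      hR.trans (mul_le_mul_of_nonneg_left hx' (by positivity))
    calc (R : EReal) ≤ ((1/(n:ℝ) * x : ℝ) : EReal) := EReal.coe_le_coe_iff.2 hRx
    _ = ((1/(n:ℝ) : ℝ) : EReal) * (x : EReal) := by rw [EReal.coe_mul]
end
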